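/- arXiv:1507.08890 — 2 statements merged into one kernel-verified Lean document; each statement's English description precedes it below -/
import Mathlib

section
/- Let β = (n+1)/n for an integer n ≥ 1, and suppose positive reals satisfy C(p+1)·X_p ≥ X_{(p+1)β}^{1/β} for all p ≥ 1, where X_q = ‖φ‖_{L^q}^q for a fixed bounded measurable φ ≥ 0 on a finite measure space. If additionally ‖φ‖_{L^∞} = ε > 0, then there is a constant c_1 > 0, depending only on C, β, and an upper bound for the measure of the space, such that ‖φ‖_{L^β}^β ≥ c_1. -/
open MeasureTheory


open Finset

noncomputable def moserSeq (β : ℝ) : ℕ → ℝ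
  | 0 => β
  | (k+1) => (moserSeq β k + 1) * β

lemma moserSeq_ge_pow {β : ℝ} (hβ : 1 < β) : ∀ k, β ^ (k+1) ≤ moserSeq β k := by
  intro k
  induction k with
  | zero => simp [moserSeq]
  | succ k ih =>
      have hβ0 : (0:ℝ) < β := lt_trans one_pos hβ
      calc β ^ (k+2) = β ^ (k+1) * β := by ring
        _ ≤ (moserSeq β k + 1) * β := by
            have : β ^ (k+1) ≤ moserSeq β k + 1 := le_trans ih (by linarith)
            exact mul_le_mul_of_nonneg_right this hβ0.le
        _ = moserSeq β (k+1) := rfl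

lemma one_lt_moserSeq {β : ℝ} (hβ : 1 < β) (k : ℕ) : 1 < moserSeq β k :=
  lt_of_lt_of_le (by calc (1:ℝ) = 1 ^ (k+1) := (one_pow _).symm
    _ < β ^ (k+1) := by exact pow_lt_pow_left₀ hβ zero_le_one (Nat.succ_ne_zero k))
    (moserSeq_ge_pow hβ k)

lemma aux_exp_le {x : ℝ} (h0 : 0 ≤ x) (h1 : x ≤ 1/2) : Real.exp (-(2*x)) ≤ 1 - x := by
  have h2 : (1:ℝ) + 2*x ≤ Real.exp (2*x) := by
    have := Real.add_one_le_exp (2*x); linarith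
  rw [Real.exp_neg]
  have h4 : (Real.exp (2*x))⁻¹ ≤ (1 + 2*x)⁻¹ := by
    apply inv_anti₀ (by linarith) h2
  refine le_trans h4 ?_
  rw [inv_le_iff_one_le_mul₀ (by linarith)]
  nlinarith

lemma aux_geom {r : ℝ} (h0 : 0 ≤ r) (h1 : r < 1) (k : ℕ) :
    ∑ j ∈ Finset.range k, r ^ (j+1) ≤ r / (1-r) := by
  have h2 : ∑ j ∈ Finset.range k, r ^ (j+1) = r * ∑ j ∈ Finset.range k, r ^ j := by
    rw [Finset.mul_sum]; exact Finset.sum_congr rfl fun j _ => by ring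
  rw [h2]
  have h3 : ∑ j ∈ Finset.range k, r ^ j ≤ 1 / (1-r) := by
    rw [geom_sum_eq (by intro h; rw [h] at h1; linarith) k]
    have he : (r ^ k - 1) / (r - 1) = (1 - r ^ k) / (1 - r) := by
      rw [← neg_div_neg_eq]; ring_nf
    rw [he, div_le_div_iff₀ (by linarith) (by linarith)]
    nlinarith [pow_nonneg h0 k]
  calc r * ∑ j ∈ Finset.range k, r ^ j ≤ r * (1/(1-r)) := mul_le_mul_of_nonneg_left h3 h0
    _ = r / (1-r) := by ring

lemma aux_log_le {x : ℝ} (hx : 0 < x) : Real.log x ≤ 2 * Real.sqrt x := by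
  have h1 : Real.log (Real.sqrt x) ≤ Real.sqrt x - 1 :=
    Real.log_le_sub_one_of_pos (Real.sqrt_pos.mpr hx)
  have h2 : Real.log (Real.sqrt x) = Real.log x / 2 := Real.log_sqrt hx.le
  linarith [Real.sqrt_nonneg x]

lemma beta_facts {n : ℕ} (hn : 1 ≤ n) {β : ℝ} (hβ : β = ((n:ℝ)+1)/n) :
    1 < β ∧ β ≤ 2 ∧ β⁻¹ / (1 - β⁻¹) = (n:ℝ) := by
  have hn0 : (0:ℝ) < n := by exact_mod_cast Nat.pos_of_ne_zero (by omega)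
  have hn1 : (1:ℝ) ≤ n := by exact_mod_cast hn
  have h1 : 1 < β := by rw [hβ]; rw [lt_div_iff₀ hn0]; linarith
  have hβ0 : (0:ℝ) < β := by linarith
  refine ⟨h1, ?_, ?_⟩
  · rw [hβ, div_le_iff₀ hn0]; linarith
  · have hβi : β⁻¹ = (n:ℝ)/(n+1) := by rw [hβ]; field_simp
    rw [hβi]
    have : 1 - (n:ℝ)/(n+1) = 1/(n+1) := by field_simp; ring
    rw [this]
    field_simp

lemma moser_key {β C' : ℝ} (hβ : 1 < β) (hC' : 1 ≤ C') (Xf : ℕ → ℝ)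
    (hpos : ∀ k, 0 < Xf k)
    (hrec : ∀ k, Xf (k+1) ≤ (C' * (moserSeq β k + 1))^β * (Xf k)^β) :
    ∀ k, (Xf k) ^ (moserSeq β k)⁻¹ ≤
      (∏ j ∈ Finset.range k, (C' * (moserSeq β j + 1)) ^ (moserSeq β j + 1)⁻¹) *
      ((Xf 0) ^ β⁻¹) ^ (∏ j ∈ Finset.range k, moserSeq β j / (moserSeq β j + 1)) := by
  have hβ0 : (0:ℝ) < β := lt_trans one_pos hβ
  have hT0 : (0:ℝ) < (Xf 0) ^ β⁻¹ := Real.rpow_pos_of_pos (hpos 0) _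
  intro k
  induction k with
  | zero => simp [moserSeq]
  | succ k ih =>
      set q := moserSeq β k with hq
      have hq1 : 1 < q := one_lt_moserSeq hβ k
      have hq0 : 0 < q := by linarith
      have hq10 : (0:ℝ) < q + 1 := by linarith
      have hD0 : (0:ℝ) < C' * (q + 1) := by nlinarith
      -- step 1 : raise recursion to power (moserSeq β (k+1))⁻¹
      have h1 : Xf (k+1) ^ (moserSeq β (k+1))⁻¹ ≤
          ((C' * (q + 1))^β * (Xf k)^β) ^ ((q+1)*β)⁻¹ := by
        have : moserSeq β (k+1) = (q+1)*β := rfl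
        rw [this]
        exact Real.rpow_le_rpow (hpos _).le (hrec k) (inv_nonneg.mpr (mul_nonneg hq10.le hβ0.le))
      have h2 : ((C' * (q + 1))^β * (Xf k)^β) ^ ((q+1)*β)⁻¹ =
          (C' * (q + 1)) ^ (q+1)⁻¹ * (Xf k) ^ (q+1)⁻¹ := by
        rw [Real.mul_rpow (Real.rpow_nonneg hD0.le β) (Real.rpow_nonneg (hpos k).le β),
          ← Real.rpow_mul hD0.le, ← Real.rpow_mul (hpos k).le]
        congr 2 <;> field_simp <;> ring
      have h3 : (Xf k) ^ (q+1)⁻¹ = ((Xf k) ^ q⁻¹) ^ (q/(q+1)) := by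
        rw [← Real.rpow_mul (hpos k).le]
        congr 1
        field_simp
      -- raise IH to power r := q/(q+1)
      set P := ∏ j ∈ Finset.range k, (C' * (moserSeq β j + 1)) ^ (moserSeq β j + 1)⁻¹ with hP
      set E := ∏ j ∈ Finset.range k, moserSeq β j / (moserSeq β j + 1) with hE
      have hP1 : 1 ≤ P := by
        rw [hP]
        calc (1:ℝ) = ∏ j ∈ Finset.range k, (1:ℝ) := by simp
          _ ≤ ∏ j ∈ Finset.range k, (C' * (moserSeq β j + 1)) ^ (moserSeq β j + 1)⁻¹ := by
            apply Finset.prod_le_prod (fun j _ => zero_le_one)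
            intro j _
            calc (1:ℝ) = (C' * (moserSeq β j + 1)) ^ (0:ℝ) := (Real.rpow_zero _).symm
              _ ≤ (C' * (moserSeq β j + 1)) ^ (moserSeq β j + 1)⁻¹ := by
                apply Real.rpow_le_rpow_of_exponent_le
                · nlinarith [one_lt_moserSeq hβ j]
                · exact inv_nonneg.mpr (by nlinarith [one_lt_moserSeq hβ j])
      have hr0 : (0:ℝ) ≤ q/(q+1) := div_nonneg hq0.le hq10.le
      have hr1 : q/(q+1) ≤ 1 := by rw [div_le_one hq10]; linarith
      have h4 : ((Xf k) ^ q⁻¹) ^ (q/(q+1)) ≤ (P * ((Xf 0) ^ β⁻¹) ^ E) ^ (q/(q+1)) :=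
        Real.rpow_le_rpow (Real.rpow_nonneg (hpos k).le _) ih hr0
      have h5 : (P * ((Xf 0) ^ β⁻¹) ^ E) ^ (q/(q+1)) =
          P ^ (q/(q+1)) * ((Xf 0) ^ β⁻¹) ^ (E * (q/(q+1))) := by
        rw [Real.mul_rpow (by linarith) (Real.rpow_nonneg hT0.le E), ← Real.rpow_mul hT0.le]
      have h6 : P ^ (q/(q+1)) ≤ P := by
        calc P ^ (q/(q+1)) ≤ P ^ (1:ℝ) := Real.rpow_le_rpow_of_exponent_le hP1 hr1
          _ = P := Real.rpow_one P
      -- assemble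
      rw [Finset.prod_range_succ, Finset.prod_range_succ, ← hP, ← hE, ← hq]
      calc Xf (k+1) ^ (moserSeq β (k+1))⁻¹
          ≤ (C' * (q + 1)) ^ (q+1)⁻¹ * (((Xf k) ^ q⁻¹) ^ (q/(q+1))) := by
            rw [← h3, ← h2]; exact h1
        _ ≤ (C' * (q + 1)) ^ (q+1)⁻¹ * (P * ((Xf 0) ^ β⁻¹) ^ (E * (q/(q+1)))) := by
            apply mul_le_mul_of_nonneg_left _ (Real.rpow_nonneg hD0.le _)
            calc ((Xf k) ^ q⁻¹) ^ (q/(q+1)) ≤ P ^ (q/(q+1)) * ((Xf 0) ^ β⁻¹) ^ (E * (q/(q+1))) := by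
                  rw [← h5]; exact h4
              _ ≤ P * ((Xf 0) ^ β⁻¹) ^ (E * (q/(q+1))) :=
                  mul_le_mul_of_nonneg_right h6 (Real.rpow_nonneg hT0.le _)
        _ = P * (C' * (q + 1)) ^ (q+1)⁻¹ * ((Xf 0) ^ β⁻¹) ^ (E * (q/(q+1))) := by ring

lemma aux_sqrt_pow {x : ℝ} (h : 0 ≤ x) (m : ℕ) : Real.sqrt (x ^ m) = (Real.sqrt x) ^ m := by
  induction m with
  | zero => simp
  | succ k ih => rw [pow_succ, pow_succ, Real.sqrt_mul (pow_nonneg h k), ih]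

lemma moser_sum_inv_le {n : ℕ} (hn : 1 ≤ n) {β : ℝ} (hβ : β = ((n:ℝ)+1)/n) (k : ℕ) :
    ∑ j ∈ Finset.range k, (moserSeq β j + 1)⁻¹ ≤ (n:ℝ) := by
  obtain ⟨hβ1, hβ2, hβn⟩ := beta_facts hn hβ
  have hβ0 : (0:ℝ) < β := by linarith
  have hterm : ∀ j : ℕ, (moserSeq β j + 1)⁻¹ ≤ (β⁻¹)^(j+1) := by
    intro j
    have h1 : β ^ (j+1) ≤ moserSeq β j + 1 := le_trans (moserSeq_ge_pow hβ1 j) (by linarith)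
    have h2 : (0:ℝ) < β ^ (j+1) := pow_pos hβ0 _
    calc (moserSeq β j + 1)⁻¹ ≤ (β^(j+1))⁻¹ := inv_anti₀ h2 h1
      _ = (β⁻¹)^(j+1) := by rw [inv_pow]
  calc ∑ j ∈ Finset.range k, (moserSeq β j + 1)⁻¹ ≤ ∑ j ∈ Finset.range k, (β⁻¹)^(j+1) :=
      Finset.sum_le_sum (fun j _ => hterm j)
    _ ≤ β⁻¹/(1-β⁻¹) := aux_geom (inv_nonneg.mpr hβ0.le) (inv_lt_one_of_one_lt₀ hβ1) k
    _ = n := hβn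

lemma moser_prod_lower {n : ℕ} (hn : 1 ≤ n) {β : ℝ} (hβ : β = ((n:ℝ)+1)/n) (k : ℕ) :
    Real.exp (-(2*(n:ℝ))) ≤ ∏ j ∈ Finset.range k, moserSeq β j / (moserSeq β j + 1) := by
  obtain ⟨hβ1, hβ2, hβn⟩ := beta_facts hn hβ
  have step : ∀ j : ℕ, Real.exp (-(2 * (moserSeq β j + 1)⁻¹)) ≤ moserSeq β j / (moserSeq β j + 1) := by
    intro j
    have hq1 := one_lt_moserSeq hβ1 j
    have hq10 : (0:ℝ) < moserSeq β j + 1 := by linarith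
    have hx0 : (0:ℝ) ≤ (moserSeq β j + 1)⁻¹ := inv_nonneg.mpr hq10.le
    have hx1 : (moserSeq β j + 1)⁻¹ ≤ 1/2 := by
      calc (moserSeq β j + 1)⁻¹ ≤ (2:ℝ)⁻¹ := inv_anti₀ two_pos (by linarith)
        _ = 1/2 := by norm_num
    calc Real.exp (-(2 * (moserSeq β j + 1)⁻¹)) ≤ 1 - (moserSeq β j + 1)⁻¹ := aux_exp_le hx0 hx1
      _ = moserSeq β j / (moserSeq β j + 1) := by field_simp; ring
  calc Real.exp (-(2*(n:ℝ)))
      ≤ Real.exp (-(2 * ∑ j ∈ Finset.range k, (moserSeq β j + 1)⁻¹)) := by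
        apply Real.exp_le_exp.mpr
        have := moser_sum_inv_le hn hβ k
        linarith
    _ = ∏ j ∈ Finset.range k, Real.exp (-(2 * (moserSeq β j + 1)⁻¹)) := by
        rw [← Real.exp_sum]
        congr 1
        rw [Finset.mul_sum, ← Finset.sum_neg_distrib]
    _ ≤ ∏ j ∈ Finset.range k, moserSeq β j / (moserSeq β j + 1) :=
        Finset.prod_le_prod (fun j _ => (Real.exp_pos _).le) (fun j _ => step j)

lemma moser_prod_upper {n : ℕ} (hn : 1 ≤ n) {β C' : ℝ} (hβ : β = ((n:ℝ)+1)/n) (hC' : 1 ≤ C')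
    (k : ℕ) :
    ∏ j ∈ Finset.range k, (C' * (moserSeq β j + 1)) ^ (moserSeq β j + 1)⁻¹ ≤
      Real.exp ((n:ℝ) * Real.log C' + 6 * n) := by
  obtain ⟨hβ1, hβ2, hβn⟩ := beta_facts hn hβ
  have hn0 : (0:ℝ) < n := by exact_mod_cast Nat.pos_of_ne_zero (by omega)
  have hn1 : (1:ℝ) ≤ n := by exact_mod_cast hn
  have hβ0 : (0:ℝ) < β := by linarith
  have hβn' : (β - 1) * n = 1 := by rw [hβ]; field_simp; ring
  set b := Real.sqrt β with hb
  have hb0 : 0 ≤ b := Real.sqrt_nonneg β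
  have hbb : b * b = β := Real.mul_self_sqrt hβ0.le
  have hb1 : 1 < b := by nlinarith
  have hb2 : b ≤ 2 := by nlinarith
  have hC'0 : (0:ℝ) < C' := by linarith
  have hlogC' : 0 ≤ Real.log C' := Real.log_nonneg hC'
  have hfac : ∀ j ∈ Finset.range k, (C' * (moserSeq β j + 1)) ^ (moserSeq β j + 1)⁻¹ =
      Real.exp (Real.log (C' * (moserSeq β j + 1)) * (moserSeq β j + 1)⁻¹) := by
    intro j _
    exact Real.rpow_def_of_pos (by nlinarith [one_lt_moserSeq hβ1 j]) _
  rw [Finset.prod_congr rfl hfac, ← Real.exp_sum]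
  apply Real.exp_le_exp.mpr
  have hterm : ∀ j : ℕ, Real.log (C' * (moserSeq β j + 1)) * (moserSeq β j + 1)⁻¹ ≤
      Real.log C' * (β⁻¹)^(j+1) + 2 * (b⁻¹)^(j+1) := by
    intro j
    set q := moserSeq β j with hq
    have hq1 : 1 < q := one_lt_moserSeq hβ1 j
    have ha0 : (0:ℝ) < q + 1 := by linarith
    have hai : (0:ℝ) ≤ (q+1)⁻¹ := inv_nonneg.mpr ha0.le
    have hpow : β ^ (j+1) ≤ q + 1 := le_trans (moserSeq_ge_pow hβ1 j) (by linarith)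
    have hinv : (q+1)⁻¹ ≤ (β⁻¹)^(j+1) := by
      calc (q+1)⁻¹ ≤ (β^(j+1))⁻¹ := inv_anti₀ (pow_pos hβ0 _) hpow
        _ = (β⁻¹)^(j+1) := by rw [inv_pow]
    have hlog : Real.log (C' * (q+1)) = Real.log C' + Real.log (q+1) :=
      Real.log_mul (ne_of_gt hC'0) (ne_of_gt ha0)
    have hsq0 : (0:ℝ) < Real.sqrt (q+1) := Real.sqrt_pos.mpr ha0
    have hsa : Real.sqrt (q+1) * (q+1)⁻¹ = (Real.sqrt (q+1))⁻¹ := by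
      have h := Real.mul_self_sqrt ha0.le
      field_simp; exact Real.sq_sqrt ha0.le
    have hsqpow : b ^ (j+1) ≤ Real.sqrt (q+1) := by
      calc b ^ (j+1) = Real.sqrt (β^(j+1)) := (aux_sqrt_pow hβ0.le (j+1)).symm
        _ ≤ Real.sqrt (q+1) := Real.sqrt_le_sqrt hpow
    have hpiece2 : Real.log (q+1) * (q+1)⁻¹ ≤ 2 * (b⁻¹)^(j+1) := by
      calc Real.log (q+1) * (q+1)⁻¹ ≤ (2 * Real.sqrt (q+1)) * (q+1)⁻¹ :=
            mul_le_mul_of_nonneg_right (aux_log_le ha0) hai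
        _ = 2 * (Real.sqrt (q+1))⁻¹ := by rw [mul_assoc, hsa]
        _ ≤ 2 * (b^(j+1))⁻¹ := by
            apply mul_le_mul_of_nonneg_left _ (by norm_num)
            exact inv_anti₀ (pow_pos (by linarith) _) hsqpow
        _ = 2 * (b⁻¹)^(j+1) := by rw [inv_pow]
    calc Real.log (C' * (q+1)) * (q+1)⁻¹
        = Real.log C' * (q+1)⁻¹ + Real.log (q+1) * (q+1)⁻¹ := by rw [hlog]; ring
      _ ≤ Real.log C' * (β⁻¹)^(j+1) + 2 * (b⁻¹)^(j+1) := by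
          have := mul_le_mul_of_nonneg_left hinv hlogC'
          linarith
  have hsum1 : ∑ j ∈ Finset.range k, (β⁻¹)^(j+1) ≤ (n:ℝ) := by
    calc ∑ j ∈ Finset.range k, (β⁻¹)^(j+1) ≤ β⁻¹/(1-β⁻¹) :=
        aux_geom (inv_nonneg.mpr hβ0.le) (inv_lt_one_of_one_lt₀ hβ1) k
      _ = n := hβn
  have hsum2 : ∑ j ∈ Finset.range k, (b⁻¹)^(j+1) ≤ 3*(n:ℝ) := by
    have hb01 : b⁻¹ < 1 := inv_lt_one_of_one_lt₀ hb1
    have h1 : ∑ j ∈ Finset.range k, (b⁻¹)^(j+1) ≤ b⁻¹/(1-b⁻¹) :=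
      aux_geom (inv_nonneg.mpr hb0) hb01 k
    have h2 : b⁻¹/(1-b⁻¹) = 1/(b-1) := by
      rw [div_eq_div_iff (by linarith) (by linarith)]
      field_simp
    have h3 : 1/(b-1) ≤ 3*(n:ℝ) := by
      rw [div_le_iff₀ (by linarith)]
      nlinarith
    linarith
  calc ∑ j ∈ Finset.range k, Real.log (C' * (moserSeq β j + 1)) * (moserSeq β j + 1)⁻¹
      ≤ ∑ j ∈ Finset.range k, (Real.log C' * (β⁻¹)^(j+1) + 2 * (b⁻¹)^(j+1)) :=
        Finset.sum_le_sum (fun j _ => hterm j)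
    _ = Real.log C' * (∑ j ∈ Finset.range k, (β⁻¹)^(j+1)) +
        2 * (∑ j ∈ Finset.range k, (b⁻¹)^(j+1)) := by
        rw [Finset.sum_add_distrib, ← Finset.mul_sum, ← Finset.mul_sum]
    _ ≤ Real.log C' * n + 2 * (3*n) := by
        have := mul_le_mul_of_nonneg_left hsum1 hlogC'
        linarith
    _ = (n:ℝ) * Real.log C' + 6 * n := by ring

theorem moser_iteration_lower_bound (n : ℕ) (hn : 1 ≤ n) (β : ℝ)
    (hβ : β = ((n : ℝ) + 1) / n) (C : ℝ) (hC : 0 < C) (M : ℝ) (hM : 0 < M)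
    (ε : ℝ) (hε : 0 < ε) :
    ∃ c₁ : ℝ, 0 < c₁ ∧
      ∀ (X : Type) (_ : MeasurableSpace X) (μ : Measure X) (_ : IsFiniteMeasure μ)
        (φ : X → ℝ), Measurable φ → (∀ x, 0 ≤ φ x) →
        μ Set.univ ≤ ENNReal.ofReal M →
        eLpNorm φ ⊤ μ = ENNReal.ofReal ε →
        (∀ p : ℝ, 1 ≤ p →
          C * (p + 1) * ∫ x, φ x ^ p ∂μ ≥ (∫ x, φ x ^ ((p + 1) * β) ∂μ) ^ (1 / β)) →
        (∫ x, φ x ^ β ∂μ) ≥ c₁ := by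
  obtain ⟨hβ1, hβ2, hβn⟩ := beta_facts hn hβ
  have hβ0 : (0:ℝ) < β := by linarith
  set C' := max C 1 with hC'def
  have hC'1 : 1 ≤ C' := le_max_right _ _
  have hCC' : C ≤ C' := le_max_left _ _
  set P := Real.exp ((n:ℝ) * Real.log C' + 6 * n) with hPdef
  have hP0 : 0 < P := Real.exp_pos _
  set E := Real.exp (-(2*(n:ℝ))) with hEdef
  have hE0 : 0 < E := Real.exp_pos _
  set a := min 1 (ε / (4*P)) with hadef
  have ha0 : 0 < a := lt_min one_pos (by positivity)
  have ha1 : a ≤ 1 := min_le_left _ _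
  refine ⟨a ^ (β / E), Real.rpow_pos_of_pos ha0 _, ?_⟩
  intro X mX μ hFin φ hφm hφ0 hμM hsup hrec
  -- φ ≤ ε a.e.
  have hae : ∀ᵐ x ∂μ, φ x ≤ ε := by
    have h1 : ∀ᵐ x ∂μ, (‖φ x‖₊ : ENNReal) ≤ eLpNormEssSup φ μ := ae_le_eLpNormEssSup
    rw [← eLpNorm_exponent_top, hsup] at h1
    filter_upwards [h1] with x hx
    change ‖φ x‖ₑ ≤ _ at hx; rw [← ofReal_norm_eq_enorm] at hx
    have h2 := (ENNReal.ofReal_le_ofReal_iff hε.le).mp hx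
    rwa [Real.norm_eq_abs, abs_of_nonneg (hφ0 x)] at h2
  -- integrability of all powers
  have hint : ∀ r : ℝ, 0 ≤ r → Integrable (fun x => φ x ^ r) μ := by
    intro r hr
    apply Integrable.mono' (integrable_const (ε ^ r))
    · exact (by fun_prop : Measurable fun x => φ x ^ r).aestronglyMeasurable
    · filter_upwards [hae] with x hx
      rw [Real.norm_eq_abs, abs_of_nonneg (Real.rpow_nonneg (hφ0 x) r)]
      exact Real.rpow_le_rpow (hφ0 x) hx hr
  -- the set where φ is large
  set A := {x | ε/2 < φ x} with hAdef
  have hAm : MeasurableSet A := measurableSet_lt measurable_const hφm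
  have hA0 : μ A ≠ 0 := by
    intro hA
    have hae2 : ∀ᵐ x ∂μ, φ x ≤ ε/2 := by
      rw [ae_iff]
      convert hA using 2
      ext x
      simp [hAdef, not_le]
    have hb : eLpNorm φ ⊤ μ ≤ ENNReal.ofReal (ε/2) := by
      rw [eLpNorm_exponent_top]
      apply eLpNormEssSup_le_of_ae_bound (C := ε/2)
      filter_upwards [hae2] with x hx
      rw [Real.norm_eq_abs, abs_of_nonneg (hφ0 x)]; exact hx
    rw [hsup] at hb
    have := (ENNReal.ofReal_le_ofReal_iff (by linarith)).mp hb
    linarith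
  set m := (μ A).toReal with hmdef
  have hm0 : 0 < m := ENNReal.toReal_pos hA0 (measure_ne_top μ A)
  -- lower bound for all the integrals
  have hXlow : ∀ r : ℝ, 0 ≤ r → (ε/2)^r * m ≤ ∫ x, φ x ^ r ∂μ := by
    intro r hr
    have h1 : (ε/2)^r * m ≤ ∫ x in A, φ x ^ r ∂μ := by
      apply setIntegral_ge_of_const_le_real hAm (measure_ne_top μ A)
      · intro x hx
        exact Real.rpow_le_rpow (by linarith) (le_of_lt hx) hr
      · exact (hint r hr).integrableOn
    refine le_trans h1 (setIntegral_le_integral (hint r hr) ?_)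
    filter_upwards with x
    exact Real.rpow_nonneg (hφ0 x) r
  set Xf : ℕ → ℝ := fun k => ∫ x, φ x ^ (moserSeq β k) ∂μ with hXfdef
  have hmq : ∀ k, (0:ℝ) ≤ moserSeq β k := fun k =>
    le_of_lt (lt_trans one_pos (one_lt_moserSeq hβ1 k))
  have hXpos : ∀ k, 0 < Xf k := by
    intro k
    have := hXlow (moserSeq β k) (hmq k)
    have hp : (0:ℝ) < (ε/2)^(moserSeq β k) * m := by
      apply mul_pos _ hm0
      exact Real.rpow_pos_of_pos (by linarith) _
    exact lt_of_lt_of_le hp this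
  -- the recursion in the needed form
  have hrec' : ∀ k, Xf (k+1) ≤ (C' * (moserSeq β k + 1))^β * (Xf k)^β := by
    intro k
    have hq1 : 1 < moserSeq β k := one_lt_moserSeq hβ1 k
    have h1 := hrec (moserSeq β k) hq1.le
    have h2 : (Xf (k+1)) ^ (1/β) ≤ C' * (moserSeq β k + 1) * Xf k := by
      have he : Xf (k+1) = ∫ x, φ x ^ ((moserSeq β k + 1)*β) ∂μ := rfl
      rw [he]
      refine le_trans h1 ?_
      have : 0 ≤ (moserSeq β k + 1) * Xf k := by
        apply mul_nonneg (by linarith) (hXpos k).le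
      calc C * (moserSeq β k + 1) * Xf k = C * ((moserSeq β k + 1) * Xf k) := by ring
        _ ≤ C' * ((moserSeq β k + 1) * Xf k) := mul_le_mul_of_nonneg_right hCC' this
        _ = C' * (moserSeq β k + 1) * Xf k := by ring
    have h3 : ((Xf (k+1)) ^ (1/β)) ^ β = Xf (k+1) := by
      rw [← Real.rpow_mul (hXpos (k+1)).le, one_div, inv_mul_cancel₀ (ne_of_gt hβ0),
        Real.rpow_one]
    calc Xf (k+1) = ((Xf (k+1)) ^ (1/β)) ^ β := h3.symm
      _ ≤ (C' * (moserSeq β k + 1) * Xf k) ^ β :=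
          Real.rpow_le_rpow (Real.rpow_nonneg (hXpos _).le _) h2 hβ0.le
      _ = (C' * (moserSeq β k + 1))^β * (Xf k)^β :=
          Real.mul_rpow (mul_nonneg (by linarith) (by linarith)) (hXpos k).le
  have hkey := moser_key hβ1 hC'1 Xf hXpos hrec'
  -- choose k with m^(q k)⁻¹ ≥ 1/2
  have hchoose : ∃ k, 1/2 ≤ m ^ (moserSeq β k)⁻¹ := by
    by_cases hm1 : 1 ≤ m
    · refine ⟨0, ?_⟩
      have h1 : (1:ℝ)^(moserSeq β 0)⁻¹ ≤ m ^ (moserSeq β 0)⁻¹ :=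
        Real.rpow_le_rpow zero_le_one hm1 (inv_nonneg.mpr (hmq 0))
      rw [Real.one_rpow] at h1
      linarith
    · push_neg at hm1
      obtain ⟨k, hk⟩ := pow_unbounded_of_one_lt ((-Real.log m)/Real.log 2) hβ1
      refine ⟨k, ?_⟩
      have hqk0 : (0:ℝ) < moserSeq β k := by linarith [one_lt_moserSeq hβ1 k]
      have hqk : (-Real.log m)/Real.log 2 < moserSeq β k := by
        calc (-Real.log m)/Real.log 2 < β ^ k := hk
          _ ≤ β ^ (k+1) := pow_le_pow_right₀ hβ1.le (Nat.le_succ k)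
          _ ≤ moserSeq β k := moserSeq_ge_pow hβ1 k
      have hlog2 : 0 < Real.log 2 := Real.log_pos one_lt_two
      have hlm : Real.log m < 0 := Real.log_neg hm0 hm1
      have hstep : -Real.log 2 ≤ Real.log m * (moserSeq β k)⁻¹ := by
        rw [div_lt_iff₀ hlog2] at hqk
        rw [neg_le, ← neg_mul]
        rw [← div_eq_mul_inv, div_le_iff₀ hqk0]
        linarith
      calc (1:ℝ)/2 = Real.exp (Real.log (1/2)) := (Real.exp_log (by norm_num)).symm
        _ ≤ Real.exp (Real.log m * (moserSeq β k)⁻¹) := by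
            apply Real.exp_le_exp.mpr
            rw [one_div, Real.log_inv]
            exact hstep
        _ = m ^ (moserSeq β k)⁻¹ := (Real.rpow_def_of_pos hm0 _).symm
  obtain ⟨k, hk2⟩ := hchoose
  have hqk0 : (0:ℝ) < moserSeq β k := by linarith [one_lt_moserSeq hβ1 k]
  -- ε/4 lower bound at level k
  have huk : ε/4 ≤ (Xf k) ^ (moserSeq β k)⁻¹ := by
    have h1 : ((ε/2)^(moserSeq β k) * m) ^ (moserSeq β k)⁻¹ ≤ (Xf k) ^ (moserSeq β k)⁻¹ := by
      apply Real.rpow_le_rpow _ (hXlow _ (hmq k)) (inv_nonneg.mpr (hmq k))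
      apply mul_nonneg (Real.rpow_nonneg (by linarith) _) hm0.le
    have h2 : ((ε/2)^(moserSeq β k) * m) ^ (moserSeq β k)⁻¹ = (ε/2) * m ^ (moserSeq β k)⁻¹ := by
      rw [Real.mul_rpow (Real.rpow_nonneg (by linarith) _) hm0.le,
        ← Real.rpow_mul (by linarith : (0:ℝ) ≤ ε/2), mul_inv_cancel₀ (ne_of_gt hqk0),
        Real.rpow_one]
    have h3 : ε/4 ≤ (ε/2) * m ^ (moserSeq β k)⁻¹ := by
      calc ε/4 = (ε/2) * (1/2) := by ring
        _ ≤ (ε/2) * m ^ (moserSeq β k)⁻¹ := mul_le_mul_of_nonneg_left hk2 (by linarith)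
    rw [h2] at h1
    linarith
  by_cases hX1 : Xf 0 ≤ 1
  · -- main case
    set T := (Xf 0) ^ β⁻¹ with hTdef
    have hT0 : 0 < T := Real.rpow_pos_of_pos (hXpos 0) _
    have hT1 : T ≤ 1 := Real.rpow_le_one (hXpos 0).le hX1 (inv_nonneg.mpr hβ0.le)
    have h4 : (Xf k) ^ (moserSeq β k)⁻¹ ≤ P * T ^ E := by
      refine le_trans (hkey k) ?_
      have hTE : T ^ (∏ j ∈ Finset.range k, moserSeq β j / (moserSeq β j + 1)) ≤ T ^ E :=
        Real.rpow_le_rpow_of_exponent_ge hT0 hT1 (moser_prod_lower hn hβ k)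
      apply mul_le_mul (moser_prod_upper hn hβ hC'1 k) hTE (Real.rpow_nonneg hT0.le _) hP0.le
    have h5 : ε/4 ≤ P * T^E := le_trans huk h4
    have h6 : a ≤ T^E := by
      have h7 : ε/(4*P) ≤ T^E := by
        rw [div_le_iff₀ (by positivity)]
        calc ε = 4 * (ε/4) := by ring
          _ ≤ 4 * (P * T^E) := by linarith
          _ = T^E * (4*P) := by ring
      exact le_trans (min_le_right _ _) h7
    have h7 : a ^ (E⁻¹) ≤ T := by
      calc a ^ E⁻¹ ≤ (T^E) ^ E⁻¹ := Real.rpow_le_rpow ha0.le h6 (inv_nonneg.mpr hE0.le)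
        _ = T := by rw [← Real.rpow_mul hT0.le, mul_inv_cancel₀ (ne_of_gt hE0), Real.rpow_one]
    have h8 : a ^ (β/E) ≤ Xf 0 := by
      calc a ^ (β/E) = (a ^ E⁻¹) ^ β := by
            rw [← Real.rpow_mul ha0.le]
            congr 1
            rw [div_eq_mul_inv]; ring
        _ ≤ T ^ β := Real.rpow_le_rpow (Real.rpow_nonneg ha0.le _) h7 hβ0.le
        _ = Xf 0 := by
            rw [hTdef, ← Real.rpow_mul (hXpos 0).le, inv_mul_cancel₀ (ne_of_gt hβ0),
              Real.rpow_one]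
    exact h8
  · -- trivial case : the integral is bigger than 1
    push_neg at hX1
    have hc1 : a ^ (β/E) ≤ 1 := Real.rpow_le_one ha0.le ha1 (by positivity)
    have he0 : Xf 0 = ∫ x, φ x ^ β ∂μ := rfl
    rw [← he0]
    linarith
end

section
/- (Gårding's inequality for elementary symmetric polynomials) For λ, μ ∈ Γ_k ⊂ ℝ^n and 1 ≤ j ≤ k, one has Σ_i μ_i S_{j-1;i}(λ) ≥ j S_j(λ)^{(j-1)/j} S_j(μ)^{1/j} > 0. -/
open Finset

/-- The `j`-th elementary symmetric polynomial of `x : Fin n → ℝ`. -/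
noncomputable def esym (n j : ℕ) (x : Fin n → ℝ) : ℝ :=
  ∑ s ∈ powersetCard j (univ : Finset (Fin n)), ∏ i ∈ s, x i

/-- The Gårding `k`-positive cone `Γ_k ⊆ ℝ^n`. -/
def GardingCone (n k : ℕ) : Set (Fin n → ℝ) :=
  {x | ∀ j, 1 ≤ j → j ≤ k → 0 < esym n j x}

/-- The `j`-th elementary symmetric polynomial in the variables omitting the `i`-th one. -/
noncomputable def esymOmit (n j : ℕ) (i : Fin n) (x : Fin n → ℝ) : ℝ :=
  ∑ s ∈ powersetCard j ((univ : Finset (Fin n)).erase i), ∏ m ∈ s, x m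

open Polynomial

/-- Coefficients of a product of linear polynomials. -/
lemma coeff_prod_linear {R : Type*} [CommRing R] {ι : Type*} [DecidableEq ι]
    (S : Finset ι) (a b : ι → R) (m : ℕ) :
    (∏ i ∈ S, (C (a i) + C (b i) * X)).coeff m
      = ∑ T ∈ S.powersetCard m, (∏ i ∈ T, b i) * ∏ i ∈ S \ T, a i := by
  induction S using Finset.induction_on generalizing m with
  | empty =>
      cases m with
      | zero => simp
      | succ k =>
          rw [Finset.powersetCard_eq_empty.mpr (by simp)]
          simp [Polynomial.coeff_one]
  | insert _ _ hx ih =>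
      rename_i x S
      rw [Finset.prod_insert hx, add_mul, Polynomial.coeff_add, Polynomial.coeff_C_mul,
        mul_assoc, Polynomial.coeff_C_mul]
      cases m with
      | zero =>
          simp only [Finset.powersetCard_zero, Finset.sum_singleton, Finset.prod_empty, one_mul,
            Finset.sdiff_empty] at *
          rw [show (X * ∏ i ∈ S, (C (a i) + C (b i) * X)).coeff 0
              = X.coeff 0 * (∏ i ∈ S, (C (a i) + C (b i) * X)).coeff 0 from
              Polynomial.mul_coeff_zero _ _]
          simp [ih 0, Finset.prod_insert hx]
      | succ k =>
          rw [Polynomial.coeff_X_mul, ih (k+1), ih k,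
            Finset.powersetCard_succ_insert hx, Finset.sum_union, Finset.sum_image]
          · rw [Finset.mul_sum, Finset.mul_sum]
            congr 1
            · apply Finset.sum_congr rfl
              intro T hT
              rw [Finset.mem_powersetCard] at hT
              have hxT : x ∉ T := fun h => hx (hT.1 h)
              rw [Finset.insert_sdiff_of_notMem _ hxT, Finset.prod_insert (by
                simp only [Finset.mem_sdiff]; exact fun h => hx h.1)]
              ring
            · apply Finset.sum_congr rfl
              intro T hT
              rw [Finset.mem_powersetCard] at hT
              have hxT : x ∉ T := fun h => hx (hT.1 h)
              have hS : insert x S \ insert x T = S \ T := by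
                ext y
                by_cases hy : y = x <;> simp [Finset.mem_sdiff, hy, hx, hxT] <;> tauto
              rw [Finset.prod_insert hxT, hS]
              ring
          · intro T hT T' hT' hTT'
            rw [Finset.mem_coe, Finset.mem_powersetCard] at hT hT'
            have h1 : x ∉ T := fun h => hx (hT.1 h)
            have h2 : x ∉ T' := fun h => hx (hT'.1 h)
            have := congrArg (fun s => Finset.erase s x) hTT'
            simpa [Finset.erase_insert h1, Finset.erase_insert h2] using this
          · rw [Finset.disjoint_left]
            intro T hT hT2
            rw [Finset.mem_powersetCard] at hT
            simp only [Finset.mem_image] at hT2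
            obtain ⟨T', _, rfl⟩ := hT2
            exact hx (hT.1 (Finset.mem_insert_self x T'))

/-- generic elementary symmetric function -/
noncomputable def esymGen {R : Type*} [CommRing R] (n j : ℕ) (x : Fin n → R) : R :=
  ∑ S ∈ powersetCard j (univ : Finset (Fin n)), ∏ i ∈ S, x i

lemma esym_eq_esymGen (n j : ℕ) (x : Fin n → ℝ) : esym n j x = esymGen n j x := rfl

/-- the one-parameter family polynomial `t ↦ S_j(a + t b)` -/
noncomputable def esymPoly {R : Type*} [CommRing R] (n j : ℕ) (a b : Fin n → R) : R[X] :=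
  ∑ S ∈ powersetCard j (univ : Finset (Fin n)), ∏ i ∈ S, (C (a i) + C (b i) * X)

lemma esymPoly_coeff {R : Type*} [CommRing R] (n j : ℕ) (a b : Fin n → R) (m : ℕ) :
    (esymPoly n j a b).coeff m
      = ∑ S ∈ powersetCard j (univ : Finset (Fin n)),
          ∑ T ∈ S.powersetCard m, (∏ i ∈ T, b i) * ∏ i ∈ S \ T, a i := by
  rw [esymPoly, Polynomial.finset_sum_coeff]
  exact Finset.sum_congr rfl fun S _ => coeff_prod_linear S a b m

lemma esymPoly_eval {R : Type*} [CommRing R] (n j : ℕ) (a b : Fin n → R) (t : R) :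
    (esymPoly n j a b).eval t = esymGen n j (fun i => a i + b i * t) := by
  simp [esymPoly, esymGen, eval_finset_sum, eval_prod]

lemma esymPoly_map {R S : Type*} [CommRing R] [CommRing S] (f : R →+* S)
    (n j : ℕ) (a b : Fin n → R) :
    (esymPoly n j a b).map f = esymPoly n j (f ∘ a) (f ∘ b) := by
  simp [esymPoly, Polynomial.map_sum, Polynomial.map_prod, Function.comp]

lemma esymPoly_natDegree_le {R : Type*} [CommRing R] (n j : ℕ) (a b : Fin n → R) :
    (esymPoly n j a b).natDegree ≤ j := by
  apply Polynomial.natDegree_sum_le_of_forall_le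
  intro S hS
  refine le_trans (Polynomial.natDegree_prod_le _ _) ?_
  rw [Finset.mem_powersetCard] at hS
  calc ∑ i ∈ S, (C (a i) + C (b i) * X).natDegree ≤ ∑ _i ∈ S, 1 := by
        apply Finset.sum_le_sum
        intro i _
        refine le_trans (Polynomial.natDegree_add_le _ _) ?_
        simp only [Polynomial.natDegree_C, max_le_iff]
        exact ⟨Nat.zero_le 1, le_trans (Polynomial.natDegree_mul_le) (by simp [Polynomial.natDegree_X_le])⟩
    _ = S.card := by simp
    _ = j := hS.2

lemma esymPoly_coeff_top {R : Type*} [CommRing R] (n j : ℕ) (a b : Fin n → R) :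
    (esymPoly n j a b).coeff j = esymGen n j b := by
  rw [esymPoly_coeff, esymGen]
  apply Finset.sum_congr rfl
  intro S hS
  rw [Finset.mem_powersetCard] at hS
  rw [← hS.2, Finset.powersetCard_self, Finset.sum_singleton, Finset.sdiff_self,
    Finset.prod_empty, mul_one]

lemma esymPoly_coeff_zero {R : Type*} [CommRing R] (n j : ℕ) (a b : Fin n → R) :
    (esymPoly n j a b).coeff 0 = esymGen n j a := by
  rw [esymPoly_coeff, esymGen]
  apply Finset.sum_congr rfl
  intro S _
  rw [Finset.powersetCard_zero, Finset.sum_singleton, Finset.prod_empty, one_mul,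
    Finset.sdiff_empty]

/-- the erase/insert reindexing for sums over pairs (S, i ∈ S) -/
lemma sum_powersetCard_erase {M : Type*} [AddCommMonoid M] {n m : ℕ} (hm : 1 ≤ m)
    (U : Finset (Fin n)) (f : Fin n → Finset (Fin n) → M) :
    ∑ S ∈ powersetCard m U, ∑ i ∈ S, f i (S.erase i)
      = ∑ i ∈ U, ∑ A ∈ powersetCard (m-1) (U.erase i), f i A := by
  rw [Finset.sum_sigma', Finset.sum_sigma']
  apply Finset.sum_nbij' (i := fun p => (⟨p.2, p.1.erase p.2⟩ : (_ : Fin n) × Finset (Fin n)))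
    (j := fun p => (⟨insert p.1 p.2, p.1⟩ : (_ : Finset (Fin n)) × Fin n))
  · rintro ⟨S, i⟩ hSi
    simp only [Finset.mem_sigma, Finset.mem_powersetCard] at *
    obtain ⟨⟨hSU, hcard⟩, hiS⟩ := hSi
    exact ⟨hSU hiS, Finset.erase_subset_erase _ hSU, by rw [Finset.card_erase_of_mem hiS, hcard]⟩
  · rintro ⟨i, A⟩ hiA
    simp only [Finset.mem_sigma, Finset.mem_powersetCard] at *
    obtain ⟨hiU, hAsub, hAcard⟩ := hiA
    have hiA' : i ∉ A := fun h => (Finset.mem_erase.mp (hAsub h)).1 rfl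
    constructor
    · constructor
      · intro y hy
        rcases Finset.mem_insert.mp hy with rfl | hy
        · exact hiU
        · exact (Finset.erase_subset _ _) (hAsub hy)
      · rw [Finset.card_insert_of_notMem hiA', hAcard]
        omega
    · exact Finset.mem_insert_self _ _
  · rintro ⟨S, i⟩ hSi
    simp only [Finset.mem_sigma, Finset.mem_powersetCard] at hSi
    simp [Finset.insert_erase hSi.2]
  · rintro ⟨i, A⟩ hiA
    simp only [Finset.mem_sigma, Finset.mem_powersetCard] at hiA
    have hiA' : i ∉ A := fun h => (Finset.mem_erase.mp (hiA.2.1 h)).1 rfl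
    simp [Finset.erase_insert hiA']
  · rintro ⟨S, i⟩ _
    rfl

/-- summing over (i, A ⊆ univ.erase i) equals a constant multiple over all A -/
lemma sum_erase_swap {M : Type*} [AddCommMonoid M] {n m : ℕ} (g : Finset (Fin n) → M) :
    ∑ i : Fin n, ∑ A ∈ powersetCard m ((univ : Finset (Fin n)).erase i), g A
      = ∑ A ∈ powersetCard m (univ : Finset (Fin n)), (n - m) • g A := by
  rw [Finset.sum_comm' (t' := powersetCard m (univ : Finset (Fin n)))
    (s' := fun A => univ \ A)]
  · apply Finset.sum_congr rfl
    intro A hA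
    rw [Finset.sum_const, Finset.card_sdiff_of_subset (Finset.subset_univ A), Finset.card_univ,
      Fintype.card_fin]
    rw [Finset.mem_powersetCard] at hA
    rw [hA.2]
  · intro i A
    simp only [Finset.mem_univ, true_and, Finset.mem_powersetCard, Finset.mem_sdiff]
    rw [Finset.subset_erase]
    tauto

lemma esymPoly_coeff_one (n j : ℕ) (hj : 1 ≤ j) (a b : Fin n → ℝ) :
    (esymPoly n j a b).coeff 1 = ∑ i, b i * esymOmit n (j-1) i a := by
  rw [esymPoly_coeff]
  have h1 : ∀ S ∈ powersetCard j (univ : Finset (Fin n)),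
      ∑ T ∈ S.powersetCard 1, (∏ i ∈ T, b i) * ∏ i ∈ S \ T, a i
        = ∑ i ∈ S, b i * ∏ m ∈ S.erase i, a m := by
    intro S _
    rw [Finset.powersetCard_one, Finset.sum_map]
    apply Finset.sum_congr rfl
    intro i _
    simp only [Function.Embedding.coeFn_mk, Finset.prod_singleton]
    congr 1
    rw [Finset.sdiff_singleton_eq_erase]
  rw [Finset.sum_congr rfl h1,
    sum_powersetCard_erase hj (univ : Finset (Fin n)) (fun i A => b i * ∏ m ∈ A, a m)]
  apply Finset.sum_congr rfl
  intro i _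
  rw [esymOmit, Finset.mul_sum]
section Rolle
open Finset Polynomial

variable {n j : ℕ} {y : Fin n → ℝ}

/-- esymPoly with direction 𝟙, rewritten with monic linear factors -/
lemma esymPoly_one_eq (n m : ℕ) (y : Fin n → ℝ) :
    esymPoly n m y (fun _ => 1)
      = ∑ S ∈ powersetCard m (univ : Finset (Fin n)), ∏ i ∈ S, (X + C (y i)) := by
  unfold esymPoly
  apply Finset.sum_congr rfl
  intro S _
  apply Finset.prod_congr rfl
  intro i _
  rw [map_one, one_mul, add_comm]

lemma derivative_sum_powersetCard (n m : ℕ) (hm : 1 ≤ m) (y : Fin n → ℝ) :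
    derivative (∑ S ∈ powersetCard m (univ : Finset (Fin n)), ∏ i ∈ S, (X + C (y i)))
      = (n - (m - 1)) • ∑ A ∈ powersetCard (m-1) (univ : Finset (Fin n)), ∏ i ∈ A, (X + C (y i)) := by
  rw [map_sum]
  have h1 : ∀ S ∈ powersetCard m (univ : Finset (Fin n)),
      derivative (∏ i ∈ S, (X + C (y i))) = ∑ i ∈ S, ∏ a ∈ S.erase i, (X + C (y a)) := by
    intro S _
    rw [Finset.prod_eq_multiset_prod, Polynomial.derivative_prod, Finset.sum]
    congr 1
    apply Multiset.map_congr rfl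
    intro i hi
    simp only [Polynomial.derivative_add, Polynomial.derivative_X,
      Polynomial.derivative_C, add_zero, mul_one]
    rw [Finset.prod_eq_multiset_prod, Finset.erase_val]
  rw [Finset.sum_congr rfl h1,
    sum_powersetCard_erase hm (univ : Finset (Fin n)) (fun i A => ∏ a ∈ A, (X + C (y a))),
    sum_erase_swap, Finset.smul_sum]

lemma iterate_derivative_prod_one (n : ℕ) (y : Fin n → ℝ) :
    ∀ d, d ≤ n → ∃ c : ℕ, 0 < c ∧
      derivative^[d] (∑ S ∈ powersetCard n (univ : Finset (Fin n)), ∏ i ∈ S, (X + C (y i)))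
        = c • ∑ S ∈ powersetCard (n - d) (univ : Finset (Fin n)), ∏ i ∈ S, (X + C (y i)) := by
  intro d
  induction d with
  | zero => exact fun _ => ⟨1, Nat.one_pos, by simp⟩
  | succ d ih =>
      intro hdn
      obtain ⟨c, hc, hcd⟩ := ih (Nat.le_of_succ_le hdn)
      refine ⟨c * (n - (n - d - 1)), Nat.mul_pos hc (by omega), ?_⟩
      rw [Function.iterate_succ_apply', hcd, map_nsmul,
        derivative_sum_powersetCard n (n - d) (by omega) y, smul_smul,
        show n - d - 1 = n - (d + 1) by omega]

lemma prod_X_add_C_roots (n : ℕ) (y : Fin n → ℝ) :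
    (∏ i : Fin n, (X + C (y i))).roots = (univ : Finset (Fin n)).val.map (fun i => - y i) := by
  have : (∏ i : Fin n, (X + C (y i)))
      = (((univ : Finset (Fin n)).val.map (fun i => - y i)).map (fun a => X - C a)).prod := by
    rw [Multiset.map_map]
    rw [Finset.prod, Multiset.map_congr rfl]
    intro i _
    simp [sub_neg_eq_add]
  rw [this, Polynomial.roots_multiset_prod_X_sub_C]

lemma esymGen_one (n m : ℕ) : esymGen n m (fun _ => (1:ℝ)) = (n.choose m : ℝ) := by
  simp [esymGen, Finset.card_powersetCard]

lemma esymPoly_one_natDegree (hjn : j ≤ n) :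
    (esymPoly n j y (fun _ => 1)).natDegree = j := by
  refine le_antisymm (esymPoly_natDegree_le n j _ _) ?_
  apply Polynomial.le_natDegree_of_ne_zero
  rw [esymPoly_coeff_top, esymGen_one]
  have := Nat.choose_pos hjn
  positivity

lemma esymPoly_one_card_roots (hj : 1 ≤ j) (hjn : j ≤ n) (y : Fin n → ℝ) :
    (esymPoly n j y (fun _ => 1)).roots.card = j := by
  obtain ⟨c, hc, hcd⟩ := iterate_derivative_prod_one n y (n - j) (Nat.sub_le _ _)
  rw [show n - (n - j) = j by omega] at hcd
  have hQd : (esymPoly n j y (fun _ => 1)).natDegree = j := esymPoly_one_natDegree hjn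
  have hQne : esymPoly n j y (fun _ => 1) ≠ 0 := by
    intro h
    have := esymPoly_one_natDegree (y := y) hjn
    rw [h, Polynomial.natDegree_zero] at this
    omega
  -- roots of iterated derivative
  have key : ∀ d, (derivative^[d] (∑ S ∈ powersetCard n (univ : Finset (Fin n)),
      ∏ i ∈ S, (X + C (y i)))).roots.card + d ≥ n := by
    intro d
    induction d with
    | zero =>
        rw [Function.iterate_zero_apply]
        have hcu : (univ : Finset (Fin n)).card = n := by
          rw [Finset.card_univ, Fintype.card_fin]
        have hn : powersetCard n (univ : Finset (Fin n)) = {univ} := by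
          have h := Finset.powersetCard_self (univ : Finset (Fin n))
          rw [hcu] at h
          exact h
        rw [hn, Finset.sum_singleton, prod_X_add_C_roots]
        simp
    | succ d ih =>
        rw [Function.iterate_succ_apply']
        have := Polynomial.card_roots_le_derivative
          (derivative^[d] (∑ S ∈ powersetCard n (univ : Finset (Fin n)), ∏ i ∈ S, (X + C (y i))))
        omega
  have h1 := key (n - j)
  rw [hcd, ← esymPoly_one_eq] at h1
  have h2 : (c • esymPoly n j y (fun _ => 1)).roots
      = (esymPoly n j y (fun _ => 1)).roots := by
    rw [show (c • esymPoly n j y (fun _ => 1)) = (c : ℝ) • esymPoly n j y (fun _ => 1) by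
      rw [Nat.cast_smul_eq_nsmul]]
    exact Polynomial.roots_smul_nonzero _ (by positivity)
  rw [h2] at h1
  have h3 : (esymPoly n j y (fun _ => 1)).roots.card ≤ j := by
    have := Polynomial.card_roots' (esymPoly n j y (fun _ => 1))
    omega
  omega

/-- a real polynomial with as many real roots as its degree has only real roots over ℂ -/
lemma roots_real_of_card_eq {p : ℝ[X]} (hp : p ≠ 0) (h : p.roots.card = p.natDegree) :
    ∀ z ∈ (p.map (algebraMap ℝ ℂ)).roots, z.im = 0 := by
  intro z hz
  have hinj : Function.Injective (algebraMap ℝ ℂ) := (algebraMap ℝ ℂ).injective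
  have hpm : p.map (algebraMap ℝ ℂ) ≠ 0 := by
    rwa [Ne, Polynomial.map_eq_zero_iff hinj]
  have hle : p.roots.map (algebraMap ℝ ℂ) ≤ (p.map (algebraMap ℝ ℂ)).roots :=
    Polynomial.map_roots_le hpm
  have hcard : ((p.map (algebraMap ℝ ℂ)).roots).card ≤ (p.roots.map (algebraMap ℝ ℂ)).card := by
    rw [Multiset.card_map, h]
    have := Polynomial.card_roots' (p.map (algebraMap ℝ ℂ))
    rw [Polynomial.natDegree_map_eq_of_injective hinj] at this
    exact this
  have heq := Multiset.eq_of_le_of_card_le hle hcard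
  rw [← heq] at hz
  obtain ⟨r, _, rfl⟩ := Multiset.mem_map.mp hz
  simp [Complex.ofReal_im]

theorem esymPoly_one_roots_real (hj : 1 ≤ j) (hjn : j ≤ n) (y : Fin n → ℝ) :
    ∀ z ∈ ((esymPoly n j y (fun _ => 1)).map (algebraMap ℝ ℂ)).roots, z.im = 0 := by
  apply roots_real_of_card_eq
  · intro h
    have := esymPoly_one_natDegree (y := y) hjn
    rw [h, Polynomial.natDegree_zero] at this
    omega
  · rw [esymPoly_one_card_roots hj hjn, esymPoly_one_natDegree hjn]

end Rolle
section Cone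
open Finset Polynomial

variable {n j : ℕ}

/-- membership in the Gårding cone up to level j -/
def ConeUpTo (n j : ℕ) (x : Fin n → ℝ) : Prop := ∀ i, 1 ≤ i → i ≤ j → 0 < esym n i x

lemma esym_zero' (x : Fin n → ℝ) : esym n 0 x = 1 := by
  rw [esym, Finset.powersetCard_zero, Finset.sum_singleton, Finset.prod_empty]

lemma ConeUpTo.nonneg {x : Fin n → ℝ} (h : ConeUpTo n j x) :
    ∀ i, i ≤ j → 0 ≤ esym n i x := by
  intro i hi
  rcases Nat.eq_zero_or_pos i with rfl | hpos
  · rw [esym_zero']; norm_num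
  · exact le_of_lt (h i hpos hi)

lemma esym_one_eq_choose (n i : ℕ) : esym n i (fun _ => (1:ℝ)) = (n.choose i : ℝ) := by
  rw [esym_eq_esymGen, esymGen_one]

lemma coneUpTo_one (hjn : j ≤ n) : ConeUpTo n j (fun _ => (1:ℝ)) := by
  intro i _ hij
  rw [esym_one_eq_choose]
  have := Nat.choose_pos (le_trans hij hjn)
  positivity

lemma esym_smul (i : ℕ) (c : ℝ) (x : Fin n → ℝ) :
    esym n i (fun m => c * x m) = c ^ i * esym n i x := by
  rw [esym, esym, Finset.mul_sum]
  apply Finset.sum_congr rfl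
  intro S hS
  rw [Finset.mem_powersetCard] at hS
  rw [Finset.prod_mul_distrib, Finset.prod_const, hS.2]

lemma ConeUpTo.smul {x : Fin n → ℝ} (h : ConeUpTo n j x) {c : ℝ} (hc : 0 < c) :
    ConeUpTo n j (fun m => c * x m) := by
  intro i h1 h2
  rw [esym_smul]
  exact mul_pos (pow_pos hc i) (h i h1 h2)

lemma esymPoly_one_coeff_nonneg (hj : 1 ≤ j) (hjn : j ≤ n) {y : Fin n → ℝ}
    (hy : ∀ i, i ≤ j → 0 ≤ esym n i y) :
    ∀ m, 0 ≤ (esymPoly n j y (fun _ => 1)).coeff m := by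
  intro m
  rcases le_or_gt m j with hm | hm
  · obtain ⟨c, hc, hcd⟩ := iterate_derivative_prod_one n y (n - j) (Nat.sub_le _ _)
    rw [show n - (n - j) = j by omega] at hcd
    have hcoeff := congrArg (fun p => Polynomial.coeff p m) hcd
    rw [Polynomial.coeff_iterate_derivative] at hcoeff
    have hcu : (univ : Finset (Fin n)).card = n := by
      rw [Finset.card_univ, Fintype.card_fin]
    have hn : powersetCard n (univ : Finset (Fin n)) = {univ} := by
      have h := Finset.powersetCard_self (univ : Finset (Fin n))
      rw [hcu] at h
      exact h
    rw [hn, Finset.sum_singleton] at hcoeff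
    have hprod : (∏ i : Fin n, (X + C (y i))).coeff (m + (n - j))
        = esym n (j - m) y := by
      have hcard : Multiset.card ((univ : Finset (Fin n)).val.map y) = n := by
        rw [Multiset.card_map]; exact hcu
      have h1 : (∏ i : Fin n, (X + C (y i)))
          = (((univ : Finset (Fin n)).val.map y).map fun r => X + C r).prod := by
        rw [Multiset.map_map, Finset.prod]
        rfl
      rw [h1, Multiset.prod_X_add_C_coeff _ (by rw [hcard]; omega), hcard,
        show n - (m + (n - j)) = j - m by omega, Finset.esymm_map_val]
      rfl
    rw [hprod, ← esymPoly_one_eq] at hcoeff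
    have hrhs : ((c • esymPoly n j y fun _ => (1:ℝ)).coeff m)
        = (c : ℝ) * (esymPoly n j y fun _ => (1:ℝ)).coeff m := by
      rw [Polynomial.coeff_smul, nsmul_eq_mul]
    rw [hrhs] at hcoeff
    have hnn : 0 ≤ (c:ℝ) * (esymPoly n j y fun _ => (1:ℝ)).coeff m := by
      rw [← hcoeff, nsmul_eq_mul]
      have := hy (j - m) (by omega)
      positivity
    have hc' : (0:ℝ) < c := by exact_mod_cast hc
    exact nonneg_of_mul_nonneg_right hnn hc'
  · rw [Polynomial.coeff_eq_zero_of_natDegree_lt]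
    exact lt_of_le_of_lt (esymPoly_natDegree_le n j _ _) hm

lemma esymPoly_one_eval_pos (hj : 1 ≤ j) (hjn : j ≤ n) {y : Fin n → ℝ}
    (hy : ∀ i, i ≤ j → 0 ≤ esym n i y) (hy0 : 0 < esym n j y) {t : ℝ} (ht : 0 ≤ t) :
    0 < (esymPoly n j y (fun _ => 1)).eval t := by
  rw [Polynomial.eval_eq_sum_range]
  apply Finset.sum_pos'
  · intro i _
    have h1 := esymPoly_one_coeff_nonneg hj hjn hy i
    positivity
  · refine ⟨0, Finset.mem_range.mpr (Nat.succ_pos _), ?_⟩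
    rw [pow_zero, mul_one, esymPoly_coeff_zero, ← esym_eq_esymGen]
    exact hy0

lemma ConeUpTo.add_const {y : Fin n → ℝ} (hjn : j ≤ n) (h : ConeUpTo n j y) {t : ℝ}
    (ht : 0 ≤ t) : ConeUpTo n j (fun m => y m + t) := by
  intro i h1 h2
  have key : esym n i (fun m => y m + t) = (esymPoly n i y (fun _ => 1)).eval t := by
    rw [esymPoly_eval, esym_eq_esymGen]
    congr 1
    funext m
    rw [one_mul]
  rw [key]
  exact esymPoly_one_eval_pos h1 (le_trans h2 hjn)
    (fun i' hi' => (fun hle => h.nonneg i' (le_trans hi' h2)) hi')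
    (h i h1 h2) ht

lemma ConeUpTo.one_add_smul {mu : Fin n → ℝ} (hjn : j ≤ n) (h : ConeUpTo n j mu) {θ : ℝ}
    (hθ : 0 ≤ θ) : ConeUpTo n j (fun m => 1 + θ * mu m) := by
  rcases eq_or_lt_of_le hθ with rfl | hθ'
  · simpa using coneUpTo_one hjn
  · have h2 : ConeUpTo n j (fun m => θ * (mu m + 1/θ)) := by
      apply ConeUpTo.smul _ hθ'
      exact h.add_const hjn (by positivity)
    have : (fun m => 1 + θ * mu m) = (fun m => θ * (mu m + 1/θ)) := by
      funext m
      field_simp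
      ring
    rw [this]
    exact h2
end Cone
section RootsLimit
open Finset Polynomial Filter

/-- polynomial with given coefficient vector -/
noncomputable def polyOf {d : ℕ} (c : Fin (d+1) → ℂ) : ℂ[X] :=
  ∑ m : Fin (d+1), Polynomial.monomial (m : ℕ) (c m)

lemma polyOf_coeff_fin {d : ℕ} (c : Fin (d+1) → ℂ) (m : Fin (d+1)) :
    (polyOf c).coeff m = c m := by
  rw [polyOf, Polynomial.finset_sum_coeff, Finset.sum_eq_single m]
  · rw [Polynomial.coeff_monomial, if_pos rfl]
  · intro b _ hb
    rw [Polynomial.coeff_monomial, if_neg (fun h => hb (Fin.ext h))]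
  · simp

lemma polyOf_coeff_large {d : ℕ} (c : Fin (d+1) → ℂ) {i : ℕ} (hi : d < i) :
    (polyOf c).coeff i = 0 := by
  rw [polyOf, Polynomial.finset_sum_coeff]
  apply Finset.sum_eq_zero
  intro m _
  rw [Polynomial.coeff_monomial, if_neg]
  omega

lemma polyOf_natDegree_le {d : ℕ} (c : Fin (d+1) → ℂ) : (polyOf c).natDegree ≤ d := by
  apply Polynomial.natDegree_sum_le_of_forall_le
  intro m _
  exact le_trans (Polynomial.natDegree_monomial_le _) (by omega)

lemma polyOf_natDegree {d : ℕ} (c : Fin (d+1) → ℂ) (h : c (Fin.last d) ≠ 0) :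
    (polyOf c).natDegree = d := by
  refine le_antisymm (polyOf_natDegree_le c) ?_
  apply Polynomial.le_natDegree_of_ne_zero
  have := polyOf_coeff_fin c (Fin.last d)
  rw [Fin.val_last] at this
  rw [this]
  exact h

lemma polyOf_ne_zero {d : ℕ} (c : Fin (d+1) → ℂ) (h : c (Fin.last d) ≠ 0) :
    polyOf c ≠ 0 := by
  intro hz
  have := polyOf_coeff_fin c (Fin.last d)
  rw [hz, Fin.val_last] at this
  exact h (by rw [← this, Polynomial.coeff_zero])

lemma polyOf_leadingCoeff {d : ℕ} (c : Fin (d+1) → ℂ) (h : c (Fin.last d) ≠ 0) :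
    (polyOf c).leadingCoeff = c (Fin.last d) := by
  rw [Polynomial.leadingCoeff, polyOf_natDegree c h]
  have := polyOf_coeff_fin c (Fin.last d)
  rwa [Fin.val_last] at this

lemma polyOf_eq {d : ℕ} (p : ℂ[X]) (hp : p.natDegree ≤ d) :
    polyOf (fun m : Fin (d+1) => p.coeff m) = p := by
  apply Polynomial.ext
  intro i
  rcases le_or_gt i d with hi | hi
  · have := polyOf_coeff_fin (fun m : Fin (d+1) => p.coeff m) ⟨i, by omega⟩
    simpa using this
  · rw [polyOf_coeff_large _ hi, Polynomial.coeff_eq_zero_of_natDegree_lt (lt_of_le_of_lt hp hi)]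

lemma multiset_eq_map_univ {α : Type*} {d : ℕ} (s : Multiset α) (h : Multiset.card s = d) :
    ∃ r : Fin d → α, s = Multiset.map r (Finset.univ : Finset (Fin d)).val := by
  have hl : s.toList.length = d := by rw [Multiset.length_toList, h]
  obtain rfl : d = s.toList.length := hl.symm
  refine ⟨s.toList.get, ?_⟩
  rw [Fin.univ_def]
  change s = Multiset.map s.toList.get ↑(List.finRange s.toList.length)
  rw [Multiset.map_coe, List.map_get_finRange, Multiset.coe_toList]

lemma exists_roots_enum {d : ℕ} (p : ℂ[X]) (hp : p.natDegree = d) (h0 : p ≠ 0) :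
    ∃ r : Fin d → ℂ, p.roots = Multiset.map r (Finset.univ : Finset (Fin d)).val := by
  apply multiset_eq_map_univ
  rw [← hp]
  exact (Polynomial.splits_iff_card_roots).mp (IsAlgClosed.splits p)

/-- crude bound for roots -/
lemma root_norm_bound {p : ℂ[X]} {z : ℂ} (hz : z ∈ p.roots) :
    ‖z‖ ≤ max 1 (∑ m ∈ Finset.range p.natDegree, ‖p.coeff m‖ / ‖p.leadingCoeff‖) := by
  have hp : p ≠ 0 := by
    intro h; rw [h, Polynomial.roots_zero] at hz; exact absurd hz (Multiset.notMem_zero z)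
  have heval : p.eval z = 0 := (Polynomial.mem_roots hp).mp hz
  rcases Nat.eq_zero_or_pos p.natDegree with hd | hd
  · exfalso
    have := Polynomial.eq_C_of_natDegree_eq_zero hd
    rw [this, Polynomial.eval_C] at heval
    rw [this] at hp
    exact hp (by rw [heval, map_zero])
  rcases le_or_gt ‖z‖ 1 with h1 | h1
  · exact le_trans h1 (le_max_left _ _)
  refine le_trans ?_ (le_max_right _ _)
  set d := p.natDegree with hdd
  have hlead : p.leadingCoeff ≠ 0 := Polynomial.leadingCoeff_ne_zero.mpr hp
  have hkey : ‖p.leadingCoeff‖ * ‖z‖ ^ d ≤ (∑ m ∈ Finset.range d, ‖p.coeff m‖) * ‖z‖ ^ (d-1) := by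
    have he : p.coeff d * z ^ d = -(∑ m ∈ Finset.range d, p.coeff m * z ^ m) := by
      have := Polynomial.eval_eq_sum_range' (p := p) (n := d + 1) (by omega) z
      rw [heval, Finset.sum_range_succ] at this
      linear_combination -this
    have hnorm : ‖p.leadingCoeff‖ * ‖z‖^d = ‖p.coeff d * z^d‖ := by
      rw [norm_mul, norm_pow]; rfl
    rw [hnorm, he, norm_neg]
    refine le_trans (norm_sum_le _ _) ?_
    rw [Finset.sum_mul]
    apply Finset.sum_le_sum
    intro m hm
    rw [Finset.mem_range] at hm
    rw [norm_mul, norm_pow]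
    apply mul_le_mul_of_nonneg_left _ (norm_nonneg _)
    exact pow_le_pow_right₀ h1.le (by omega)
  have hz1 : (0:ℝ) < ‖z‖ ^ (d-1) := by positivity
  have hpow : ‖z‖^d = ‖z‖^(d-1) * ‖z‖ := by
    rw [← pow_succ]
    congr 1
    omega
  rw [hpow] at hkey
  have h2 : ‖p.leadingCoeff‖ * ‖z‖ ≤ ∑ m ∈ Finset.range d, ‖p.coeff m‖ := by
    have h3 : (‖p.leadingCoeff‖ * ‖z‖) * ‖z‖^(d-1)
        ≤ (∑ m ∈ Finset.range d, ‖p.coeff m‖) * ‖z‖^(d-1) := by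
      calc (‖p.leadingCoeff‖ * ‖z‖) * ‖z‖^(d-1) = ‖p.leadingCoeff‖ * (‖z‖^(d-1) * ‖z‖) := by ring
      _ ≤ _ := hkey
    exact le_of_mul_le_mul_right h3 hz1
  have hlead' : (0:ℝ) < ‖p.leadingCoeff‖ := norm_pos_iff.mpr hlead
  rw [← Finset.sum_div, le_div_iff₀ hlead']
  calc ‖z‖ * ‖p.leadingCoeff‖ = ‖p.leadingCoeff‖ * ‖z‖ := by ring
  _ ≤ _ := h2

end RootsLimit
section RootsLimit2
open Finset Polynomial Filter

lemma coeff_prod_X_sub {d : ℕ} (w : Fin d → ℂ) (m : ℕ) :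
    (∏ i : Fin d, (X - C (w i))).coeff m
      = ∑ T ∈ powersetCard m (univ : Finset (Fin d)), ∏ i ∈ univ \ T, (- w i) := by
  have h : ∀ i : Fin d, (X - C (w i)) = C (-w i) + C 1 * X := by
    intro i
    rw [map_neg, map_one, one_mul, sub_eq_neg_add, add_comm]
  rw [Finset.prod_congr rfl (fun i _ => h i), coeff_prod_linear]
  apply Finset.sum_congr rfl
  intro T _
  rw [Finset.prod_const_one, one_mul]

lemma continuous_coeffFun {d : ℕ} (m : ℕ) :
    Continuous fun w : Fin d → ℂ =>
      ∑ T ∈ powersetCard m (univ : Finset (Fin d)), ∏ i ∈ univ \ T, (- w i) := by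
  apply continuous_finset_sum
  intro T _
  apply continuous_finset_prod
  intro i _
  exact (continuous_apply i).neg

lemma roots_subseq_converge {d : ℕ} (q : ℕ → Fin (d+1) → ℂ) (q0 : Fin (d+1) → ℂ)
    (hq : ∀ m, Tendsto (fun nn => q nn m) atTop (nhds (q0 m)))
    (hlead : ∀ nn, q nn (Fin.last d) ≠ 0) (hlead0 : q0 (Fin.last d) ≠ 0) :
    ∃ φ : ℕ → ℕ, StrictMono φ ∧ ∃ r : ℕ → Fin d → ℂ, ∃ r0 : Fin d → ℂ,
      (∀ nn, (polyOf (q (φ nn))).roots = Multiset.map (r nn) (Finset.univ : Finset (Fin d)).val) ∧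
      (∀ i, Tendsto (fun nn => r nn i) atTop (nhds (r0 i))) ∧
      (polyOf q0).roots = Multiset.map r0 (Finset.univ : Finset (Fin d)).val := by
  have hdeg : ∀ nn, (polyOf (q nn)).natDegree = d := fun nn => polyOf_natDegree _ (hlead nn)
  have hne : ∀ nn, polyOf (q nn) ≠ 0 := fun nn => polyOf_ne_zero _ (hlead nn)
  choose r' hr' using fun nn => exists_roots_enum (polyOf (q nn)) (hdeg nn) (hne nn)
  -- the bound
  set B : ℕ → ℝ := fun nn =>
    max 1 (∑ m ∈ Finset.range d, ‖(polyOf (q nn)).coeff m‖ / ‖(polyOf (q nn)).leadingCoeff‖)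
    with hB
  have hcoefft : ∀ m : ℕ, Tendsto (fun nn => (polyOf (q nn)).coeff m) atTop
      (nhds ((polyOf q0).coeff m)) := by
    intro m
    rcases le_or_gt m d with hm | hm
    · have h1 : ∀ nn, (polyOf (q nn)).coeff m = q nn ⟨m, by omega⟩ := by
        intro nn
        have := polyOf_coeff_fin (q nn) ⟨m, by omega⟩
        simpa using this
      have h0 : (polyOf q0).coeff m = q0 ⟨m, by omega⟩ := by
        have := polyOf_coeff_fin q0 ⟨m, by omega⟩
        simpa using this
      rw [h0]
      exact Tendsto.congr (fun nn => (h1 nn).symm) (hq ⟨m, by omega⟩)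
    · have h1 : ∀ nn, (polyOf (q nn)).coeff m = 0 := fun nn => polyOf_coeff_large _ hm
      rw [polyOf_coeff_large _ hm]
      exact Tendsto.congr (fun nn => (h1 nn).symm) tendsto_const_nhds
  have hleadt : Tendsto (fun nn => (polyOf (q nn)).leadingCoeff) atTop
      (nhds ((polyOf q0).leadingCoeff)) := by
    rw [polyOf_leadingCoeff q0 hlead0]
    exact Tendsto.congr (fun nn => (polyOf_leadingCoeff (q nn) (hlead nn)).symm)
      (hq (Fin.last d))
  have hBt : Tendsto B atTop (nhds (max 1 (∑ m ∈ Finset.range d,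
      ‖(polyOf q0).coeff m‖ / ‖(polyOf q0).leadingCoeff‖))) := by
    apply Tendsto.max tendsto_const_nhds
    apply tendsto_finset_sum
    intro m _
    apply Tendsto.div ((hcoefft m).norm) (hleadt.norm)
    rw [polyOf_leadingCoeff q0 hlead0]
    simpa using hlead0
  obtain ⟨M, hM⟩ : BddAbove (Set.range B) := hBt.isBoundedUnder_le.bddAbove_range
  have hMnn : (0:ℝ) ≤ M := le_trans (le_max_left 1 _) (hM (Set.mem_range_self 0)) |>.trans'
    (by norm_num)
  -- roots bounded
  have hrb : ∀ nn i, ‖r' nn i‖ ≤ M := by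
    intro nn i
    have hmem : r' nn i ∈ (polyOf (q nn)).roots := by
      rw [hr' nn]
      exact Multiset.mem_map.mpr ⟨i, by simp, rfl⟩
    have := root_norm_bound hmem
    rw [hdeg nn] at this
    exact le_trans this (hM (Set.mem_range_self nn))
  -- compactness
  have hball : ∀ nn, r' nn ∈ Metric.closedBall (0 : Fin d → ℂ) M := by
    intro nn
    rw [Metric.mem_closedBall, dist_zero_right]
    exact pi_norm_le_iff_of_nonneg hMnn |>.mpr (fun i => hrb nn i)
  obtain ⟨r0, _, φ, hφ, hconv⟩ :=
    (isCompact_closedBall (0 : Fin d → ℂ) M).tendsto_subseq hball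
  have hconv' : ∀ i, Tendsto (fun nn => r' (φ nn) i) atTop (nhds (r0 i)) := by
    intro i
    exact tendsto_pi_nhds.mp hconv i
  -- factorization of each polynomial
  have hfac : ∀ nn, polyOf (q nn)
      = C (q nn (Fin.last d)) * ∏ i : Fin d, (X - C (r' nn i)) := by
    intro nn
    have hsp := (IsAlgClosed.splits (polyOf (q nn))).eq_prod_roots
    rw [polyOf_leadingCoeff _ (hlead nn), hr' nn, Multiset.map_map] at hsp
    rw [hsp]
    congr 1
  -- limit identity
  have hkey : polyOf q0 = C (q0 (Fin.last d)) * ∏ i : Fin d, (X - C (r0 i)) := by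
    apply Polynomial.ext
    intro m
    have hF : Tendsto (fun nn => (polyOf (q (φ nn))).coeff m) atTop
        (nhds ((polyOf q0).coeff m)) := (hcoefft m).comp hφ.tendsto_atTop
    have hG : Tendsto (fun nn => (polyOf (q (φ nn))).coeff m) atTop
        (nhds ((C (q0 (Fin.last d)) * ∏ i : Fin d, (X - C (r0 i))).coeff m)) := by
      have hrw : ∀ nn, (polyOf (q (φ nn))).coeff m
          = q (φ nn) (Fin.last d) * ∑ T ∈ powersetCard m (univ : Finset (Fin d)),
              ∏ i ∈ univ \ T, (- r' (φ nn) i) := by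
        intro nn
        rw [hfac (φ nn), Polynomial.coeff_C_mul, coeff_prod_X_sub]
      rw [show (C (q0 (Fin.last d)) * ∏ i : Fin d, (X - C (r0 i))).coeff m
          = q0 (Fin.last d) * ∑ T ∈ powersetCard m (univ : Finset (Fin d)),
              ∏ i ∈ univ \ T, (- r0 i) by
        rw [Polynomial.coeff_C_mul, coeff_prod_X_sub]]
      apply Tendsto.congr (fun nn => (hrw nn).symm)
      apply Tendsto.mul ((hq (Fin.last d)).comp hφ.tendsto_atTop)
      exact ((continuous_coeffFun m).tendsto r0).comp hconv
    exact tendsto_nhds_unique hF hG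
  refine ⟨φ, hφ, fun nn => r' (φ nn), r0, fun nn => hr' (φ nn), hconv', ?_⟩
  rw [hkey, Polynomial.roots_C_mul _ hlead0]
  have hprod : (∏ i : Fin d, (X - C (r0 i)))
      = ((Multiset.map r0 (Finset.univ : Finset (Fin d)).val).map (fun a => X - C a)).prod := by
    rw [Multiset.map_map]
    rfl
  rw [hprod, Polynomial.roots_multiset_prod_X_sub_C]

end RootsLimit2
section Clopen
open Finset Polynomial Filter Set

lemma roots_stay {d : ℕ} (c : ℝ → Fin (d+1) → ℂ)
    (hc : ∀ m, Continuous fun θ => c θ m)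
    (hlead : ∀ θ ∈ Set.Icc (0:ℝ) 1, c θ (Fin.last d) ≠ 0)
    (XS O F : Set ℂ) (hO : IsOpen O) (hF : IsClosed F) (hOF : XS ∩ O = XS ∩ F)
    (hroots : ∀ θ ∈ Set.Icc (0:ℝ) 1, ∀ z ∈ (polyOf (c θ)).roots, z ∈ XS)
    (h0 : ∀ z ∈ (polyOf (c 0)).roots, z ∈ O) :
    ∀ z ∈ (polyOf (c 1)).roots, z ∈ O := by
  set I := Set.Icc (0:ℝ) 1 with hI
  haveI : PreconnectedSpace I := Subtype.preconnectedSpace isPreconnected_Icc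
  set S : Set I := {θ | ∀ z ∈ (polyOf (c θ.1)).roots, z ∈ O} with hS
  -- a common sub-step : converging sequences give converging root data
  have hsub : ∀ (θ : ℕ → I) (θ0 : I), Tendsto θ atTop (nhds θ0) →
      ∃ φ : ℕ → ℕ, StrictMono φ ∧ ∃ r : ℕ → Fin d → ℂ, ∃ r0 : Fin d → ℂ,
      (∀ nn, (polyOf (c ((θ (φ nn)) : ℝ))).roots
          = Multiset.map (r nn) (Finset.univ : Finset (Fin d)).val) ∧
      (∀ i, Tendsto (fun nn => r nn i) atTop (nhds (r0 i))) ∧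
      (polyOf (c (θ0 : ℝ))).roots = Multiset.map r0 (Finset.univ : Finset (Fin d)).val := by
    intro θ θ0 hθ
    have hval : Tendsto (fun nn => ((θ nn : ℝ))) atTop (nhds (θ0 : ℝ)) :=
      (continuous_subtype_val.tendsto θ0).comp hθ
    exact roots_subseq_converge (fun nn => c (θ nn)) (c θ0)
      (fun m => ((hc m).tendsto _).comp hval)
      (fun nn => hlead _ (θ nn).2) (hlead _ θ0.2)
  have hSclosed : IsSeqClosed S := by
    intro θ θ0 hmem hθ
    obtain ⟨φ, hφ, r, r0, hr, hconv, hr0⟩ := hsub θ θ0 hθ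
    intro z hz
    rw [hr0] at hz
    obtain ⟨i, _, rfl⟩ := Multiset.mem_map.mp hz
    have hzF : r0 i ∈ F := by
      apply hF.mem_of_tendsto (hconv i)
      apply Filter.Eventually.of_forall
      intro nn
      have hmem2 : r nn i ∈ (polyOf (c ((θ (φ nn)) : ℝ))).roots := by
        rw [hr nn]
        exact Multiset.mem_map.mpr ⟨i, by simp, rfl⟩
      have hXS : r nn i ∈ XS := hroots _ (θ (φ nn)).2 _ hmem2
      have hOmem : r nn i ∈ O := hmem (φ nn) _ hmem2
      have : r nn i ∈ XS ∩ F := hOF ▸ Set.mem_inter hXS hOmem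
      exact this.2
    have hXS0 : r0 i ∈ XS := by
      apply hroots _ θ0.2
      rw [hr0]
      exact Multiset.mem_map.mpr ⟨i, by simp, rfl⟩
    have : r0 i ∈ XS ∩ O := hOF ▸ Set.mem_inter hXS0 hzF
    exact this.2
  have hScclosed : IsSeqClosed Sᶜ := by
    intro θ θ0 hmem hθ
    obtain ⟨φ, hφ, r, r0, hr, hconv, hr0⟩ := hsub θ θ0 hθ
    have hz : ∀ nn, ∃ z ∈ (polyOf (c ((θ nn) : ℝ))).roots, z ∉ O := by
      intro nn
      have := hmem nn
      rw [Set.mem_compl_iff, hS, Set.mem_setOf_eq] at this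
      push_neg at this
      exact this
    choose z hz1 hz2 using hz
    have hidx : ∀ nn, ∃ i : Fin d, r nn i = z (φ nn) := by
      intro nn
      have := hz1 (φ nn)
      rw [hr nn] at this
      obtain ⟨i, _, hi⟩ := Multiset.mem_map.mp this
      exact ⟨i, hi⟩
    choose idx hidx' using hidx
    obtain ⟨y, hy⟩ := Finite.exists_infinite_fiber idx
    have hfreq : ∃ᶠ nn in atTop, idx nn = y := by
      rw [Nat.frequently_atTop_iff_infinite]
      rw [Set.infinite_coe_iff] at hy
      exact hy
    obtain ⟨ψ, hψ, hψy⟩ := Filter.extraction_of_frequently_atTop hfreq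
    have hconv2 : Tendsto (fun nn => r (ψ nn) y) atTop (nhds (r0 y)) :=
      (hconv y).comp hψ.tendsto_atTop
    have hnotO : r0 y ∈ Oᶜ := by
      apply (hO.isClosed_compl).mem_of_tendsto hconv2
      apply Filter.Eventually.of_forall
      intro nn
      have : r (ψ nn) y = z (φ (ψ nn)) := by rw [← hψy nn]; exact hidx' (ψ nn)
      rw [this]
      exact hz2 (φ (ψ nn))
    intro hθ0S
    apply hnotO
    apply hθ0S
    rw [hr0]
    exact Multiset.mem_map.mpr ⟨y, by simp, rfl⟩
  have hclopen : IsClopen S :=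
    ⟨hSclosed.isClosed, by rw [← isClosed_compl_iff]; exact hScclosed.isClosed⟩
  have h0' : (⟨0, by norm_num [hI]⟩ : I) ∈ S := h0
  have : S = Set.univ := hclopen.eq_univ ⟨_, h0'⟩
  have h1' : (⟨1, by norm_num [hI]⟩ : I) ∈ S := by rw [this]; trivial
  exact h1'

end Clopen
section Homotopy
open Finset Polynomial Filter

lemma esymGen_ofReal (n j : ℕ) (x : Fin n → ℝ) :
    esymGen n j (fun i => (x i : ℂ)) = ((esym n j x : ℝ) : ℂ) := by
  rw [esym_eq_esymGen, esymGen, esymGen]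
  push_cast
  rfl

/-- complexified real polynomial -/
lemma esymPolyC_eq_map (n j : ℕ) (u v : Fin n → ℝ) :
    (esymPoly n j u v).map (algebraMap ℝ ℂ)
      = esymPoly n j (fun i => (u i : ℂ)) (fun i => (v i : ℂ)) := by
  rw [esymPoly_map]
  rfl

lemma esymPolyC_ne_zero (n j : ℕ) (u v : Fin n → ℝ) (hv : esym n j v ≠ 0) :
    esymPoly n j (fun i => (u i : ℂ)) (fun i => (v i : ℂ)) ≠ 0 := by
  intro h
  have := esymPoly_coeff_top n j (fun i => (u i : ℂ)) (fun i => (v i : ℂ))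
  rw [h, Polynomial.coeff_zero, esymGen_ofReal] at this
  exact hv (by exact_mod_cast this.symm)

/-- invariant: polynomials with `iτ`-shifted real part have no real roots -/
lemma no_real_roots_tau {n j : ℕ} (hj : 1 ≤ j) (hjn : j ≤ n) (y w : Fin n → ℝ)
    {τ : ℝ} (hτ : τ ≠ 0) {z : ℂ} (hzim : z.im = 0) :
    (esymPoly n j (fun i => (y i : ℂ) + τ * Complex.I) (fun i => (w i : ℂ))).eval z ≠ 0 := by
  have hz : z = (z.re : ℂ) := Complex.ext rfl (by simp [hzim])
  obtain ⟨x, hx⟩ : ∃ x : ℝ, z = (x:ℂ) := ⟨z.re, hz⟩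
  subst hx
  set y' : Fin n → ℝ := fun i => y i + x * w i with hy'
  have hQne : esymPoly n j y' (fun _ => (1:ℝ)) ≠ 0 := by
    intro h
    have := esymPoly_one_natDegree (y := y') hjn
    rw [h, Polynomial.natDegree_zero] at this
    omega
  have heq : (esymPoly n j (fun i => (y i : ℂ) + τ * Complex.I) (fun i => (w i : ℂ))).eval ((x:ℝ):ℂ)
      = ((esymPoly n j y' (fun _ => (1:ℝ))).map (algebraMap ℝ ℂ)).eval ((τ:ℂ) * Complex.I) := by
    rw [esymPolyC_eq_map, esymPoly_eval, esymPoly_eval]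
    congr 1
    funext i
    rw [hy']
    push_cast
    ring
  intro h0
  have hroot : (τ:ℂ) * Complex.I ∈ ((esymPoly n j y' (fun _ => (1:ℝ))).map (algebraMap ℝ ℂ)).roots := by
    refine Polynomial.mem_roots'.mpr ⟨?_, ?_⟩
    · rw [Ne, Polynomial.map_eq_zero_iff (algebraMap ℝ ℂ).injective]
      exact hQne
    · rw [Polynomial.IsRoot, ← heq, h0]
  have := esymPoly_one_roots_real hj hjn y' _ hroot
  simp at this
  exact hτ this

/-- roots are closed under conjugation for complexified real polynomials -/
lemma conj_root_mem {p : ℝ[X]} {z : ℂ}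
    (hz : z ∈ (p.map (algebraMap ℝ ℂ)).roots) :
    (starRingEnd ℂ) z ∈ (p.map (algebraMap ℝ ℂ)).roots := by
  have hpne : p.map (algebraMap ℝ ℂ) ≠ 0 := by
    intro h
    rw [h, Polynomial.roots_zero] at hz
    exact Multiset.notMem_zero z hz
  rw [Polynomial.mem_roots hpne] at hz ⊢
  rw [Polynomial.IsRoot] at hz ⊢
  rw [Polynomial.eval_map, Polynomial.eval₂_eq_sum_range] at hz ⊢
  have := congrArg (starRingEnd ℂ) hz
  rw [map_sum, map_zero] at this
  rw [← this]
  apply Finset.sum_congr rfl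
  intro i _
  rw [map_mul, map_pow]
  congr 1
  exact (Complex.conj_ofReal _).symm

/-- coefficient vector of esymPoly -/
noncomputable def coeffVec (n j : ℕ) (a b : Fin n → ℂ) : Fin (j+1) → ℂ :=
  fun m => (esymPoly n j a b).coeff m

lemma polyOf_coeffVec (n j : ℕ) (a b : Fin n → ℂ) :
    polyOf (coeffVec n j a b) = esymPoly n j a b :=
  polyOf_eq _ (esymPoly_natDegree_le n j a b)

lemma coeffVec_last (n j : ℕ) (a b : Fin n → ℂ) :
    coeffVec n j a b (Fin.last j) = esymGen n j b := by
  rw [coeffVec, Fin.val_last, esymPoly_coeff_top]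

lemma continuous_coeffVec {n j : ℕ} (a b : ℝ → Fin n → ℂ)
    (ha : ∀ i, Continuous fun θ => a θ i) (hb : ∀ i, Continuous fun θ => b θ i)
    (m : Fin (j+1)) :
    Continuous fun θ => coeffVec n j (a θ) (b θ) m := by
  simp only [coeffVec, esymPoly_coeff]
  apply continuous_finset_sum
  intro S _
  apply continuous_finset_sum
  intro T _
  exact Continuous.mul (continuous_finset_prod _ (fun i _ => hb i))
    (continuous_finset_prod _ (fun i _ => ha i))

/-- a single homotopy leg in the `b` (or by symmetry another) parameter -/
lemma leg {n j : ℕ} (a : ℝ → Fin n → ℂ) (b : ℝ → Fin n → ℂ)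
    (hacont : ∀ i, Continuous fun θ => a θ i)
    (hbcont : ∀ i, Continuous fun θ => b θ i)
    (hlead : ∀ θ ∈ Set.Icc (0:ℝ) 1, esymGen n j (b θ) ≠ 0)
    (XS O F : Set ℂ) (hO : IsOpen O) (hF : IsClosed F) (hOF : XS ∩ O = XS ∩ F)
    (hroots : ∀ θ ∈ Set.Icc (0:ℝ) 1, ∀ z ∈ (esymPoly n j (a θ) (b θ)).roots, z ∈ XS)
    (h0 : ∀ z ∈ (esymPoly n j (a 0) (b 0)).roots, z ∈ O) :
    ∀ z ∈ (esymPoly n j (a 1) (b 1)).roots, z ∈ O := by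
  have hpoly : ∀ θ : ℝ, polyOf (coeffVec n j (a θ) (b θ)) = esymPoly n j (a θ) (b θ) :=
    fun θ => polyOf_coeffVec n j (a θ) (b θ)
  have := roots_stay (fun θ => coeffVec n j (a θ) (b θ))
    (continuous_coeffVec a b hacont hbcont)
    (fun θ hθ => by show coeffVec n j (a θ) (b θ) (Fin.last j) ≠ 0; rw [coeffVec_last]; exact hlead θ hθ)
    XS O F hO hF hOF
    (fun θ hθ => by rw [hpoly θ]; exact hroots θ hθ)
    (by rw [hpoly 0]; exact h0)
  rw [hpoly 1] at this
  exact this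

end Homotopy
section Hyperbolic
open Finset Polynomial Filter

variable {n j : ℕ}

lemma isOpen_imNeg : IsOpen {z : ℂ | z.im < 0} :=
  isOpen_Iio.preimage Complex.continuous_im

lemma isClosed_imLe : IsClosed {z : ℂ | z.im ≤ 0} :=
  isClosed_Iic.preimage Complex.continuous_im

lemma imOF : {z : ℂ | z.im ≠ 0} ∩ {z : ℂ | z.im < 0}
    = {z : ℂ | z.im ≠ 0} ∩ {z : ℂ | z.im ≤ 0} := by
  ext z
  simp only [Set.mem_inter_iff, Set.mem_setOf_eq]
  constructor
  · rintro ⟨h1, h2⟩; exact ⟨h1, le_of_lt h2⟩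
  · rintro ⟨h1, h2⟩; exact ⟨h1, lt_of_le_of_ne h2 h1⟩

lemma roots_XS_tau (hj : 1 ≤ j) (hjn : j ≤ n) (y w : Fin n → ℝ) {τ : ℝ} (hτ : τ ≠ 0) :
    ∀ z ∈ (esymPoly n j (fun i => (y i:ℂ) + τ*Complex.I) (fun i => (w i:ℂ))).roots,
      z ∈ {z : ℂ | z.im ≠ 0} := by
  intro z hz
  have h := Polynomial.mem_roots'.mp hz
  intro hzim
  exact no_real_roots_tau hj hjn y w hτ hzim h.2

lemma base_roots_one (hj : 1 ≤ j) (hjn : j ≤ n) (y : Fin n → ℝ) {τ : ℝ} :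
    ∀ z ∈ (esymPoly n j (fun i => (y i:ℂ) + τ*Complex.I) (fun _ => ((1:ℝ):ℂ))).roots,
      z.im = -τ := by
  intro z hz
  have h := Polynomial.mem_roots'.mp hz
  have hQne : esymPoly n j y (fun _ => (1:ℝ)) ≠ 0 := by
    intro hcontra
    have := esymPoly_one_natDegree (y := y) hjn
    rw [hcontra, Polynomial.natDegree_zero] at this
    omega
  have heq : (esymPoly n j (fun i => (y i:ℂ) + τ*Complex.I) (fun _ => ((1:ℝ):ℂ))).eval z
      = ((esymPoly n j y (fun _ => (1:ℝ))).map (algebraMap ℝ ℂ)).eval (z + τ*Complex.I) := by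
    rw [esymPolyC_eq_map, esymPoly_eval, esymPoly_eval]
    congr 1
    funext i
    push_cast
    ring
  have hroot : z + τ*Complex.I ∈
      ((esymPoly n j y (fun _ => (1:ℝ))).map (algebraMap ℝ ℂ)).roots := by
    refine Polynomial.mem_roots'.mpr ⟨?_, ?_⟩
    · rw [Ne, Polynomial.map_eq_zero_iff (algebraMap ℝ ℂ).injective]
      exact hQne
    · rw [Polynomial.IsRoot, ← heq]
      exact h.2
  have := esymPoly_one_roots_real hj hjn y _ hroot
  simp only [Complex.add_im, Complex.mul_im, Complex.ofReal_re, Complex.I_im,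
    Complex.ofReal_im, Complex.I_re, mul_zero, mul_one, zero_mul, add_zero, zero_add] at this
  linarith [this]

theorem stepA (hj : 1 ≤ j) (hjn : j ≤ n) (mu : Fin n → ℝ) (hmu : ConeUpTo n j mu)
    (y : Fin n → ℝ) {τ : ℝ} (hτ : 0 < τ) :
    ∀ z ∈ (esymPoly n j (fun i => (y i:ℂ) + τ*Complex.I) (fun i => (mu i:ℂ))).roots,
      z.im < 0 := by
  -- leg 1 : from 𝟙 to 𝟙 + μ
  have leg1 := leg (n := n) (j := j)
    (fun _ i => (y i:ℂ) + τ*Complex.I)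
    (fun θ i => ((1:ℝ):ℂ) + (θ:ℂ) * (mu i:ℂ))
    (fun i => continuous_const)
    (fun i => by continuity)
    (fun θ hθ => by
      have hb : (fun i => ((1:ℝ):ℂ) + (θ:ℂ) * (mu i:ℂ))
          = fun i => ((1 + θ * mu i : ℝ) : ℂ) := by
        funext i; push_cast; ring
      beta_reduce
      rw [hb, esymGen_ofReal]
      rw [Ne, Complex.ofReal_eq_zero]
      exact ne_of_gt ((hmu.one_add_smul hjn hθ.1) j hj le_rfl))
    {z : ℂ | z.im ≠ 0} {z : ℂ | z.im < 0} {z : ℂ | z.im ≤ 0}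
    isOpen_imNeg isClosed_imLe imOF
    (fun θ hθ => by
      have hb : (fun i => ((1:ℝ):ℂ) + (θ:ℂ) * (mu i:ℂ))
          = fun i => ((1 + θ * mu i : ℝ) : ℂ) := by
        funext i; push_cast; ring
      beta_reduce
      rw [hb]
      exact roots_XS_tau hj hjn y _ (ne_of_gt hτ))
    (by
      have hb : (fun i => ((1:ℝ):ℂ) + ((0:ℝ):ℂ) * (mu i:ℂ)) = fun _ : Fin n => ((1:ℝ):ℂ) := by
        funext i; push_cast; ring
      beta_reduce
      rw [hb]
      intro z hz
      have := base_roots_one hj hjn y z hz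
      simp only [Set.mem_setOf_eq, this]
      linarith)
  -- leg 2 : from μ + 𝟙 to μ
  have leg2 := leg (n := n) (j := j)
    (fun _ i => (y i:ℂ) + τ*Complex.I)
    (fun θ i => (mu i:ℂ) + ((1:ℝ):ℂ) - (θ:ℂ))
    (fun i => continuous_const)
    (fun i => by continuity)
    (fun θ hθ => by
      have hb : (fun i => (mu i:ℂ) + ((1:ℝ):ℂ) - (θ:ℂ))
          = fun i => ((mu i + (1 - θ) : ℝ) : ℂ) := by
        funext i; push_cast; ring
      beta_reduce
      rw [hb, esymGen_ofReal]
      rw [Ne, Complex.ofReal_eq_zero]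
      exact ne_of_gt ((hmu.add_const hjn (by linarith [hθ.2])) j hj le_rfl))
    {z : ℂ | z.im ≠ 0} {z : ℂ | z.im < 0} {z : ℂ | z.im ≤ 0}
    isOpen_imNeg isClosed_imLe imOF
    (fun θ hθ => by
      have hb : (fun i => (mu i:ℂ) + ((1:ℝ):ℂ) - (θ:ℂ))
          = fun i => ((mu i + (1 - θ) : ℝ) : ℂ) := by
        funext i; push_cast; ring
      beta_reduce
      rw [hb]
      exact roots_XS_tau hj hjn y _ (ne_of_gt hτ))
    (by
      have hb : (fun i => (mu i:ℂ) + ((1:ℝ):ℂ) - ((0:ℝ):ℂ))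
          = fun i => ((1:ℝ):ℂ) + ((1:ℝ):ℂ) * (mu i:ℂ) := by
        funext i; push_cast; ring
      beta_reduce
      rw [hb]
      exact leg1)
  intro z hz
  have hb1 : (fun i => (mu i:ℂ) + ((1:ℝ):ℂ) - ((1:ℝ):ℂ)) = fun i => (mu i:ℂ) := by
    funext i; push_cast; ring
  rw [← hb1] at hz
  exact leg2 z hz

theorem roots_real_dir (hj : 1 ≤ j) (hjn : j ≤ n) (mu : Fin n → ℝ)
    (hmu : ConeUpTo n j mu) (hmuj : 0 < esym n j mu) (y : Fin n → ℝ) :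
    ∀ z ∈ (esymPoly n j (fun i => (y i:ℂ)) (fun i => (mu i:ℂ))).roots, z.im = 0 := by
  set A : ℝ → Fin n → ℂ := fun τ i => (y i:ℂ) + (τ:ℂ)*Complex.I with hA
  have hA0 : A 0 = fun i => (y i:ℂ) := by
    funext i; rw [hA]; push_cast; ring
  have hlead : ∀ τ : ℝ, coeffVec n j (A τ) (fun i => (mu i:ℂ)) (Fin.last j) ≠ 0 := by
    intro τ
    rw [coeffVec_last, esymGen_ofReal, Ne, Complex.ofReal_eq_zero]
    exact ne_of_gt hmuj
  have hq : ∀ m : Fin (j+1), Tendsto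
      (fun nn : ℕ => coeffVec n j (A (1/(nn+1))) (fun i => (mu i:ℂ)) m) atTop
      (nhds (coeffVec n j (A 0) (fun i => (mu i:ℂ)) m)) := by
    intro m
    have hcont : Continuous fun τ : ℝ => coeffVec n j (A τ) (fun i => (mu i:ℂ)) m := by
      apply continuous_coeffVec
      · intro i
        rw [hA]
        continuity
      · intro i
        exact continuous_const
    exact (hcont.tendsto 0).comp tendsto_one_div_add_atTop_nhds_zero_nat
  obtain ⟨φ, hφ, r, r0, hr, hconv, hr0⟩ := roots_subseq_converge
    (fun nn => coeffVec n j (A (1/(nn+1))) (fun i => (mu i:ℂ)))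
    (coeffVec n j (A 0) (fun i => (mu i:ℂ)))
    hq (fun nn => hlead _) (hlead 0)
  -- all roots have im ≤ 0
  have him_le : ∀ z ∈ (esymPoly n j (fun i => (y i:ℂ)) (fun i => (mu i:ℂ))).roots,
      z.im ≤ 0 := by
    intro z hz
    have hz' : z ∈ (polyOf (coeffVec n j (A 0) (fun i => (mu i:ℂ)))).roots := by
      rw [polyOf_coeffVec, hA0]
      exact hz
    rw [hr0] at hz'
    obtain ⟨i, _, rfl⟩ := Multiset.mem_map.mp hz'
    have : r0 i ∈ {z : ℂ | z.im ≤ 0} := by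
      apply isClosed_imLe.mem_of_tendsto (hconv i)
      apply Filter.Eventually.of_forall
      intro nn
      have hmem : r nn i ∈ (polyOf (coeffVec n j (A (1/(φ nn+1))) (fun i => (mu i:ℂ)))).roots := by
        rw [hr nn]
        exact Multiset.mem_map.mpr ⟨i, by simp, rfl⟩
      rw [polyOf_coeffVec] at hmem
      have hpos : (0:ℝ) < 1/(φ nn+1) := by positivity
      have := stepA hj hjn mu hmu y hpos _ hmem
      exact le_of_lt this
    exact this
  intro z hz
  have h1 : z.im ≤ 0 := him_le z hz
  have hconj : (starRingEnd ℂ) z ∈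
      (esymPoly n j (fun i => (y i:ℂ)) (fun i => (mu i:ℂ))).roots := by
    rw [← esymPolyC_eq_map] at hz ⊢
    exact conj_root_mem hz
  have h2 : ((starRingEnd ℂ) z).im ≤ 0 := him_le _ hconj
  rw [Complex.conj_im] at h2
  linarith

end Hyperbolic
section Negativity
open Finset Polynomial Filter

variable {n j : ℕ}

lemma isOpen_reNeg : IsOpen {z : ℂ | z.re < 0} :=
  isOpen_Iio.preimage Complex.continuous_re

lemma isClosed_reLe : IsClosed {z : ℂ | z.re ≤ 0} :=
  isClosed_Iic.preimage Complex.continuous_re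

lemma reOF : {z : ℂ | z.im = 0 ∧ z.re ≠ 0} ∩ {z : ℂ | z.re < 0}
    = {z : ℂ | z.im = 0 ∧ z.re ≠ 0} ∩ {z : ℂ | z.re ≤ 0} := by
  ext z
  simp only [Set.mem_inter_iff, Set.mem_setOf_eq]
  constructor
  · rintro ⟨h1, h2⟩; exact ⟨h1, le_of_lt h2⟩
  · rintro ⟨h1, h2⟩; exact ⟨h1, lt_of_le_of_ne h2 h1.2⟩

lemma roots_XS_dir (hj : 1 ≤ j) (hjn : j ≤ n) (w mu : Fin n → ℝ)
    (hw : 0 < esym n j w) (hmu : ConeUpTo n j mu) :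
    ∀ z ∈ (esymPoly n j (fun i => (w i:ℂ)) (fun i => (mu i:ℂ))).roots,
      z.im = 0 ∧ z.re ≠ 0 := by
  intro z hz
  have him : z.im = 0 := roots_real_dir hj hjn mu hmu (hmu j hj le_rfl) w z hz
  refine ⟨him, ?_⟩
  intro hre
  have hz0 : z = 0 := Complex.ext hre him
  have h := Polynomial.mem_roots'.mp hz
  rw [hz0, Polynomial.IsRoot, ← Polynomial.coeff_zero_eq_eval_zero,
    esymPoly_coeff_zero, esymGen_ofReal] at h
  have := h.2
  rw [Complex.ofReal_eq_zero] at this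
  exact ne_of_gt hw this

lemma base_neg (hj : 1 ≤ j) (hjn : j ≤ n) (mu : Fin n → ℝ) (hmu : ConeUpTo n j mu) :
    ∀ z ∈ (esymPoly n j (fun _ => ((1:ℝ):ℂ)) (fun i => (mu i:ℂ))).roots,
      z ∈ {z : ℂ | z.re < 0} := by
  intro z hz
  have hone : (0:ℝ) < esym n j (fun _ => (1:ℝ)) := by
    rw [esym_one_eq_choose]
    have := Nat.choose_pos hjn
    positivity
  obtain ⟨him, hre⟩ := roots_XS_dir hj hjn (fun _ => (1:ℝ)) mu hone hmu z hz
  simp only [Set.mem_setOf_eq]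
  by_contra hcon
  push_neg at hcon
  have hx : (0:ℝ) ≤ z.re := hcon
  have hzeq : z = ((z.re : ℝ) : ℂ) := Complex.ext rfl (by simp [him])
  have h := Polynomial.mem_roots'.mp hz
  have heval := h.2
  rw [Polynomial.IsRoot, hzeq, ← esymPolyC_eq_map] at heval
  rw [show ((z.re:ℝ):ℂ) = algebraMap ℝ ℂ z.re from rfl, Polynomial.eval_map,
    Polynomial.eval₂_at_apply] at heval
  have heval' : Polynomial.eval z.re (esymPoly n j (fun _ => (1:ℝ)) mu) = 0 := by
    have : ((Polynomial.eval z.re (esymPoly n j (fun _ => (1:ℝ)) mu) : ℝ) : ℂ) = 0 := heval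
    exact_mod_cast this
  rw [esymPoly_eval, ← esym_eq_esymGen] at heval'
  have hpos : 0 < esym n j (fun i => 1 + mu i * z.re) := by
    have := (hmu.one_add_smul hjn hx) j hj le_rfl
    have heq : (fun m => 1 + z.re * mu m) = fun i => 1 + mu i * z.re := by
      funext m; ring
    rwa [heq] at this
  rw [heval'] at hpos
  exact lt_irrefl _ hpos

theorem roots_neg (hj : 1 ≤ j) (hjn : j ≤ n) (lam mu : Fin n → ℝ)
    (hlam : ConeUpTo n j lam) (hmu : ConeUpTo n j mu) :
    ∀ z ∈ (esymPoly n j (fun i => (lam i:ℂ)) (fun i => (mu i:ℂ))).roots,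
      z.im = 0 ∧ z.re < 0 := by
  have hmulead : esymGen n j (fun i => (mu i:ℂ)) ≠ 0 := by
    rw [esymGen_ofReal, Ne, Complex.ofReal_eq_zero]
    exact ne_of_gt (hmu j hj le_rfl)
  have leg1 := leg (n := n) (j := j)
    (fun θ i => ((1:ℝ):ℂ) + (θ:ℂ) * (lam i:ℂ))
    (fun _ i => (mu i:ℂ))
    (fun i => by continuity)
    (fun i => continuous_const)
    (fun θ hθ => hmulead)
    {z : ℂ | z.im = 0 ∧ z.re ≠ 0} {z : ℂ | z.re < 0} {z : ℂ | z.re ≤ 0}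
    isOpen_reNeg isClosed_reLe reOF
    (fun θ hθ => by
      have ha : (fun i => ((1:ℝ):ℂ) + (θ:ℂ) * (lam i:ℂ))
          = fun i => ((1 + θ * lam i : ℝ) : ℂ) := by
        funext i; push_cast; ring
      beta_reduce
      rw [ha]
      exact roots_XS_dir hj hjn _ mu ((hlam.one_add_smul hjn hθ.1) j hj le_rfl) hmu)
    (by
      have ha : (fun i => ((1:ℝ):ℂ) + ((0:ℝ):ℂ) * (lam i:ℂ)) = fun _ : Fin n => ((1:ℝ):ℂ) := by
        funext i; push_cast; ring
      beta_reduce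
      rw [ha]
      exact base_neg hj hjn mu hmu)
  have leg2 := leg (n := n) (j := j)
    (fun θ i => (lam i:ℂ) + ((1:ℝ):ℂ) - (θ:ℂ))
    (fun _ i => (mu i:ℂ))
    (fun i => by continuity)
    (fun i => continuous_const)
    (fun θ hθ => hmulead)
    {z : ℂ | z.im = 0 ∧ z.re ≠ 0} {z : ℂ | z.re < 0} {z : ℂ | z.re ≤ 0}
    isOpen_reNeg isClosed_reLe reOF
    (fun θ hθ => by
      have ha : (fun i => (lam i:ℂ) + ((1:ℝ):ℂ) - (θ:ℂ))
          = fun i => ((lam i + (1 - θ) : ℝ) : ℂ) := by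
        funext i; push_cast; ring
      beta_reduce
      rw [ha]
      exact roots_XS_dir hj hjn _ mu ((hlam.add_const hjn (by linarith [hθ.2])) j hj le_rfl) hmu)
    (by
      have ha : (fun i => (lam i:ℂ) + ((1:ℝ):ℂ) - ((0:ℝ):ℂ))
          = fun i => ((1:ℝ):ℂ) + ((1:ℝ):ℂ) * (lam i:ℂ) := by
        funext i; push_cast; ring
      beta_reduce
      rw [ha]
      exact leg1)
  intro z hz
  have him : z.im = 0 := (roots_XS_dir hj hjn lam mu (hlam j hj le_rfl) hmu z hz).1
  have ha1 : (fun i => (lam i:ℂ) + ((1:ℝ):ℂ) - ((1:ℝ):ℂ)) = fun i => (lam i:ℂ) := by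
    funext i; push_cast; ring
  rw [← ha1] at hz
  exact ⟨him, leg2 z hz⟩

end Negativity
section Endgame
open Finset Polynomial

lemma sum_powersetCard_pred {j : ℕ} (hj : 1 ≤ j) (g : Fin j → ℝ) :
    ∑ t ∈ powersetCard (j-1) (univ : Finset (Fin j)), ∏ i ∈ t, g i
      = ∑ i : Fin j, ∏ m ∈ (univ : Finset (Fin j)).erase i, g m := by
  have hcard : (univ : Finset (Fin j)).card = j := by simp
  have step1 : ∑ t ∈ powersetCard (j-1) (univ : Finset (Fin j)), ∏ i ∈ t, g i
      = ∑ s ∈ powersetCard 1 (univ : Finset (Fin j)), ∏ i ∈ sᶜ, g i := by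
    apply Finset.sum_nbij' (i := fun t => tᶜ) (j := fun s => sᶜ)
    · intro t ht
      rw [Finset.mem_powersetCard] at *
      refine ⟨Finset.subset_univ _, ?_⟩
      rw [Finset.card_compl, Fintype.card_fin, ht.2]
      omega
    · intro s hs
      rw [Finset.mem_powersetCard] at *
      refine ⟨Finset.subset_univ _, ?_⟩
      rw [Finset.card_compl, Fintype.card_fin, hs.2]
    · intro t _; exact compl_compl t
    · intro s _; exact compl_compl s
    · intro t _; rw [compl_compl]
  rw [step1, Finset.powersetCard_one, Finset.sum_map]
  apply Finset.sum_congr rfl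
  intro i _
  simp only [Function.Embedding.coeFn_mk]
  rw [Finset.compl_singleton]

theorem garding_inequality (n k j : ℕ) (hj : 1 ≤ j) (hjk : j ≤ k) (hkn : k ≤ n)
    (lam mu : Fin n → ℝ)
    (hlam : lam ∈ GardingCone n k) (hmu : mu ∈ GardingCone n k) :
    (∑ i, mu i * esymOmit n (j - 1) i lam)
      ≥ j * (esym n j lam) ^ (((j : ℝ) - 1) / j) * (esym n j mu) ^ ((1 : ℝ) / j) ∧
    0 < (j : ℝ) * (esym n j lam) ^ (((j : ℝ) - 1) / j) * (esym n j mu) ^ ((1 : ℝ) / j) := by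
  have hjn : j ≤ n := le_trans hjk hkn
  have hlam' : ConeUpTo n j lam := fun i h1 h2 => hlam i h1 (le_trans h2 hjk)
  have hmu' : ConeUpTo n j mu := fun i h1 h2 => hmu i h1 (le_trans h2 hjk)
  have hcpos : 0 < esym n j mu := hmu' j hj le_rfl
  have hLpos : 0 < esym n j lam := hlam' j hj le_rfl
  set c := esym n j mu with hc
  set P := esymPoly n j lam mu with hP
  have hPtop : P.coeff j = c := by
    rw [hP, esymPoly_coeff_top, ← esym_eq_esymGen]
  have hPdeg : P.natDegree = j := by
    refine le_antisymm (esymPoly_natDegree_le n j _ _) (Polynomial.le_natDegree_of_ne_zero ?_)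
    rw [hPtop]
    exact ne_of_gt hcpos
  have hPne : P ≠ 0 := by
    intro h
    rw [h, Polynomial.natDegree_zero] at hPdeg
    omega
  have hPCdeg : (P.map (algebraMap ℝ ℂ)).natDegree = j := by
    rw [Polynomial.natDegree_map_eq_of_injective (algebraMap ℝ ℂ).injective, hPdeg]
  have hPCne : P.map (algebraMap ℝ ℂ) ≠ 0 := by
    rwa [Ne, Polynomial.map_eq_zero_iff (algebraMap ℝ ℂ).injective]
  obtain ⟨w, hw⟩ := exists_roots_enum _ hPCdeg hPCne
  have hroots := roots_neg hj hjn lam mu hlam' hmu'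
  have hrootsmem : ∀ i : Fin j, (w i).im = 0 ∧ (w i).re < 0 := by
    intro i
    apply hroots
    rw [← esymPolyC_eq_map, ← hP]
    rw [hP, esymPolyC_eq_map] at hw ⊢
    rw [hw]
    exact Multiset.mem_map.mpr ⟨i, by simp, rfl⟩
  set g : Fin j → ℝ := fun i => -(w i).re with hg
  have hgpos : ∀ i, 0 < g i := by
    intro i
    rw [hg]
    simp only
    linarith [(hrootsmem i).2]
  have hwg : ∀ i, w i = ((-(g i) : ℝ) : ℂ) := by
    intro i
    apply Complex.ext
    · rw [hg]; simp
    · rw [(hrootsmem i).1]; simp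
  have hlead : (P.map (algebraMap ℝ ℂ)).leadingCoeff = algebraMap ℝ ℂ c := by
    rw [Polynomial.leadingCoeff, hPCdeg, Polynomial.coeff_map, hPtop]
  have hsp := (IsAlgClosed.splits (P.map (algebraMap ℝ ℂ))).eq_prod_roots
  rw [hw, Multiset.map_map, hlead] at hsp
  have hfact : P = Polynomial.C c * ∏ i : Fin j, (X + Polynomial.C (g i)) := by
    apply Polynomial.map_injective (algebraMap ℝ ℂ) (algebraMap ℝ ℂ).injective
    rw [hsp, Polynomial.map_mul, Polynomial.map_C, Polynomial.map_prod]
    congr 1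
    have : ∀ i : Fin j, ((fun a => X - Polynomial.C a) ∘ w) i
        = (X + Polynomial.C (g i)).map (algebraMap ℝ ℂ) := by
      intro i
      simp only [Function.comp_apply, Polynomial.map_add, Polynomial.map_X, Polynomial.map_C,
        Complex.coe_algebraMap]
      rw [hwg i, Complex.ofReal_neg, map_neg, sub_neg_eq_add]
    rw [Multiset.map_congr rfl (fun i _ => this i)]
    rfl
  have hcard : (univ : Finset (Fin j)).card = j := by simp
  -- coefficient identities
  have hcoeff0 : esym n j lam = c * ∏ i : Fin j, g i := by
    have h0 : P.coeff 0 = esym n j lam := by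
      rw [hP, esymPoly_coeff_zero, ← esym_eq_esymGen]
    rw [← h0, hfact, Polynomial.coeff_C_mul]
    congr 1
    rw [Finset.prod_X_add_C_coeff (univ : Finset (Fin j)) g (by omega)]
    rw [hcard, Nat.sub_zero]
    have hself : powersetCard j (univ : Finset (Fin j)) = {univ} := by
      have h := Finset.powersetCard_self (univ : Finset (Fin j))
      rwa [hcard] at h
    rw [hself, Finset.sum_singleton]
  have hcoeff1 : (∑ i, mu i * esymOmit n (j - 1) i lam)
      = c * ∑ t ∈ powersetCard (j-1) (univ : Finset (Fin j)), ∏ i ∈ t, g i := by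
    have h1 : P.coeff 1 = ∑ i, mu i * esymOmit n (j-1) i lam := by
      rw [hP, esymPoly_coeff_one n j hj lam mu]
    rw [← h1, hfact, Polynomial.coeff_C_mul]
    congr 1
    rw [Finset.prod_X_add_C_coeff (univ : Finset (Fin j)) g (by rw [hcard]; omega), hcard]
  -- AM-GM
  set G := ∏ i : Fin j, g i with hG
  have hGpos : 0 < G := Finset.prod_pos (fun i _ => hgpos i)
  set q : Fin j → ℝ := fun i => ∏ m ∈ (univ : Finset (Fin j)).erase i, g m with hq
  have hqpos : ∀ i, 0 < q i := fun i => Finset.prod_pos (fun m _ => hgpos m)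
  have hqg : ∀ i, q i * g i = G := by
    intro i
    rw [hq, hG]
    exact Finset.prod_erase_mul _ _ (Finset.mem_univ i)
  have hprodq : ∏ i : Fin j, q i = G ^ (j - 1) := by
    have h1 : ∀ i, q i = G / g i := by
      intro i
      rw [eq_div_iff (ne_of_gt (hgpos i)), hqg i]
    rw [Finset.prod_congr rfl (fun i _ => h1 i), Finset.prod_div_distrib,
      Finset.prod_const, hcard, hG]
    rw [eq_comm, eq_div_iff (ne_of_gt hGpos), ← pow_succ]
    congr 1
    omega
  have hjR : (0:ℝ) < j := by exact_mod_cast hj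
  have hamgm : (G ^ (j-1) : ℝ) ^ ((1:ℝ)/j) ≤ (1/j) * ∑ i : Fin j, q i := by
    have h := Real.geom_mean_le_arith_mean_weighted (univ : Finset (Fin j))
      (fun _ => 1/(j:ℝ)) q (fun i _ => by positivity)
      (by rw [Finset.sum_const, hcard, nsmul_eq_mul]; field_simp)
      (fun i _ => le_of_lt (hqpos i))
    rw [Real.finset_prod_rpow _ _ (fun i _ => le_of_lt (hqpos i)) _, hprodq] at h
    rw [← Finset.mul_sum] at h
    exact h
  have hsumq : (j:ℝ) * (G ^ (j-1) : ℝ) ^ ((1:ℝ)/j) ≤ ∑ i : Fin j, q i := by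
    have := mul_le_mul_of_nonneg_left hamgm (le_of_lt hjR)
    calc (j:ℝ) * (G ^ (j-1) : ℝ) ^ ((1:ℝ)/j) ≤ (j:ℝ) * ((1/j) * ∑ i : Fin j, q i) := this
    _ = ∑ i : Fin j, q i := by field_simp
  -- convert the rpow expression
  have hGe : (G ^ (j-1) : ℝ) ^ ((1:ℝ)/j) = G ^ (((j:ℝ) - 1)/j) := by
    rw [← Real.rpow_natCast G (j-1), ← Real.rpow_mul (le_of_lt hGpos)]
    congr 1
    rw [Nat.cast_sub hj]
    push_cast
    ring
  -- final RHS computation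
  have hRHS : (j:ℝ) * (esym n j lam) ^ (((j : ℝ) - 1) / j) * (esym n j mu) ^ ((1 : ℝ) / j)
      = (j:ℝ) * c * G ^ (((j:ℝ) - 1)/j) := by
    rw [hcoeff0, ← hc, Real.mul_rpow (le_of_lt hcpos) (le_of_lt hGpos)]
    have hcc : c ^ (((j:ℝ) - 1)/j) * c ^ ((1:ℝ)/j) = c := by
      rw [← Real.rpow_add hcpos]
      have : ((j:ℝ) - 1)/j + 1/j = 1 := by field_simp; ring
      rw [this, Real.rpow_one]
    calc (j:ℝ) * (c ^ (((j:ℝ) - 1)/j) * G ^ (((j:ℝ) - 1)/j)) * c ^ ((1:ℝ)/j)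
        = (j:ℝ) * (c ^ (((j:ℝ) - 1)/j) * c ^ ((1:ℝ)/j)) * G ^ (((j:ℝ) - 1)/j) := by ring
    _ = (j:ℝ) * c * G ^ (((j:ℝ) - 1)/j) := by rw [hcc]
  constructor
  · rw [ge_iff_le, hRHS, hcoeff1, sum_powersetCard_pred hj g]
    calc (j:ℝ) * c * G ^ (((j:ℝ) - 1)/j) = c * ((j:ℝ) * G ^ (((j:ℝ) - 1)/j)) := by ring
    _ ≤ c * ∑ i : Fin j, q i := by
        apply mul_le_mul_of_nonneg_left _ (le_of_lt hcpos)
        rw [← hGe]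
        exact hsumq
    _ = c * ∑ i : Fin j, ∏ m ∈ (univ : Finset (Fin j)).erase i, g m := rfl
  · have h1 : (0:ℝ) < (esym n j lam) ^ (((j : ℝ) - 1) / j) :=
      Real.rpow_pos_of_pos hLpos _
    have h2 : (0:ℝ) < (esym n j mu) ^ ((1 : ℝ) / j) :=
      Real.rpow_pos_of_pos hcpos _
    positivity

end Endgame
end
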